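/- arXiv:0901.2392 — 8 statements merged into one kernel-verified Lean document; each statement's English description precedes it below -/
import Mathlib

section
/- Let R be a Noetherian ring, I ⊆ R an ideal, and S a module-finite R-algebra. If every finite system of polynomial equations over R has the strong approximation property with respect to (R,I), then every finite system of polynomial equations over S has the strong approximation property with respect to (S,IS). -/
open MvPolynomial

lemma key_repr {R S : Type*} [CommRing R] [CommRing S] [Algebra R S]
    {m : ℕ} (s : Fin m → S) (hs : Submodule.span R (Set.range s) = ⊤)
    {N : ℕ} (q : MvPolynomial (Fin N) S) :
    ∃ P : Fin m → MvPolynomial (Fin N × Fin m) R,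
      ∀ y : Fin N × Fin m → R,
        eval (fun j => ∑ k, y (j, k) • s k) q = ∑ k, eval y (P k) • s k := by
  have hrep : ∀ x : S, ∃ c : Fin m → R, ∑ k, c k • s k = x := fun x =>
    (Submodule.mem_span_range_iff_exists_fun R).1 (hs ▸ Submodule.mem_top)
  choose c hc using fun k l => hrep (s k * s l)
  induction q using MvPolynomial.induction_on with
  | C a =>
    obtain ⟨rr, hr⟩ := hrep a
    exact ⟨fun k => C (rr k), fun y => by simp [← hr]⟩
  | add p q hp hq =>
    obtain ⟨P, hP⟩ := hp; obtain ⟨Q, hQ⟩ := hq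
    exact ⟨fun k => P k + Q k, fun y => by
      simp [hP, hQ, add_smul, Finset.sum_add_distrib]⟩
  | mul_X p j hp =>
    obtain ⟨P, hP⟩ := hp
    refine ⟨fun u => ∑ k, ∑ l, P k * X (j, l) * C (c k l u), fun y => ?_⟩
    calc eval (fun j' => ∑ k, y (j', k) • s k) (p * X j)
        = (∑ k, eval y (P k) • s k) * ∑ l, y (j, l) • s l := by
          rw [eval_mul, hP, eval_X]
      _ = ∑ k, ∑ l, ∑ u, (eval y (P k) * y (j, l) * c k l u) • s u := by
          rw [Finset.sum_mul_sum]
          refine Finset.sum_congr rfl fun k _ => Finset.sum_congr rfl fun l _ => ?_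
          rw [smul_mul_smul_comm, ← hc k l, Finset.smul_sum]
          simp [smul_smul]
      _ = ∑ u, (∑ k, ∑ l, eval y (P k) * y (j, l) * c k l u) • s u := by
          simp only [Finset.sum_smul]
          rw [show (∑ k, ∑ l, ∑ u, (eval y (P k) * y (j, l) * c k l u) • s u)
              = ∑ k, ∑ u, ∑ l, (eval y (P k) * y (j, l) * c k l u) • s u from
            Finset.sum_congr rfl fun k _ => Finset.sum_comm]
          exact Finset.sum_comm
      _ = ∑ u, eval y (∑ k, ∑ l, P k * X (j, l) * C (c k l u)) • s u := by
          simp [map_sum]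

lemma mem_smul_top_pi {R : Type*} [CommRing R] {m : ℕ} (J : Ideal R) (z : Fin m → R) :
    z ∈ J • (⊤ : Submodule R (Fin m → R)) ↔ ∀ k, z k ∈ J := by
  constructor
  · intro hz k
    refine Submodule.smul_induction_on hz (fun r hr n _ => ?_) (fun x y hx hy => ?_)
    · simpa using J.mul_mem_right (n k) hr
    · simpa using add_mem hx hy
  · intro h
    have : z = ∑ k, z k • (Pi.single k 1 : Fin m → R) := by
      ext j
      simp [Pi.single_apply, Finset.sum_apply]
    rw [this]
    exact Submodule.sum_mem _ fun k _ =>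
      Submodule.smul_mem_smul (h k) Submodule.mem_top

lemma exists_ideal_coords {R S : Type*} [CommRing R] [CommRing S] [Algebra R S]
    {m : ℕ} (s : Fin m → S) (hs : Submodule.span R (Set.range s) = ⊤)
    (J : Ideal R) {x : S} (hx : x ∈ J.map (algebraMap R S)) :
    ∃ z : Fin m → R, (∀ k, z k ∈ J) ∧ ∑ k, z k • s k = x := by
  have hrep : ∀ x : S, ∃ c : Fin m → R, ∑ k, c k • s k = x := fun x =>
    (Submodule.mem_span_range_iff_exists_fun R).1 (hs ▸ Submodule.mem_top)
  let μ : (Fin m → R) →ₗ[R] S :=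
    { toFun := fun z => ∑ k, z k • s k
      map_add' := fun a b => by simp [add_smul, Finset.sum_add_distrib]
      map_smul' := fun r a => by simp [smul_smul, Finset.smul_sum] }
  have hμ : Submodule.map μ (⊤ : Submodule R (Fin m → R)) = ⊤ := by
    rw [Submodule.map_top, LinearMap.range_eq_top]
    intro x; obtain ⟨c, hc⟩ := hrep x; exact ⟨c, hc⟩
  have h1 : x ∈ J • (⊤ : Submodule R S) := by
    rw [Ideal.smul_top_eq_map]; exact hx
  rw [← hμ, ← Submodule.map_smul''] at h1
  obtain ⟨z, hz, hzx⟩ := h1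
  exact ⟨z, (mem_smul_top_pi J z).1 hz, hzx⟩

lemma exists_kernel_gens {R S : Type*} [CommRing R] [IsNoetherianRing R]
    [CommRing S] [Algebra R S] {m : ℕ} (s : Fin m → S) :
    ∃ (p : ℕ) (w : Fin p → Fin m → R),
      (∀ u, ∑ k, w u k • s k = 0) ∧
      ∀ z : Fin m → R, (∑ k, z k • s k = 0) →
        ∃ t : Fin p → R, ∀ k, z k = ∑ u, t u * w u k := by
  let μ : (Fin m → R) →ₗ[R] S :=
    { toFun := fun z => ∑ k, z k • s k
      map_add' := fun a b => by simp [add_smul, Finset.sum_add_distrib]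
      map_smul' := fun r a => by simp [smul_smul, Finset.smul_sum] }
  have hfg : (LinearMap.ker μ).FG := IsNoetherian.noetherian _
  obtain ⟨p, w, hw⟩ := Submodule.fg_iff_exists_fin_generating_family.1 hfg
  refine ⟨p, w, fun u => ?_, fun z hz => ?_⟩
  · have : w u ∈ LinearMap.ker μ := hw ▸ Submodule.subset_span ⟨u, rfl⟩
    simpa [μ] using this
  · have hzk : z ∈ LinearMap.ker μ := by simpa [μ] using hz
    rw [← hw] at hzk
    obtain ⟨t, ht⟩ := (Submodule.mem_span_range_iff_exists_fun R).1 hzk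
    refine ⟨t, fun k => ?_⟩
    rw [← ht]
    simp [Finset.sum_apply]

/-- `β` is an Artin bound for the system `f` with respect to `(R, I)`: every approximate
solution modulo `I ^ β n` is congruent modulo `I ^ n` to an exact solution. -/
def IsArtinBound {R : Type*} [CommRing R] (I : Ideal R) {N r : ℕ}
    (f : Fin r → MvPolynomial (Fin N) R) (β : ℕ → ℕ) : Prop :=
  ∀ n : ℕ, ∀ a : Fin N → R, (∀ i, eval a (f i) ∈ I ^ β n) →
    ∃ b : Fin N → R, (∀ i, eval b (f i) = 0) ∧ ∀ j, a j - b j ∈ I ^ n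

/-- **Lemma (SAP ascends along module-finite extensions).** Let `R` be Noetherian, `I ⊆ R` an
ideal and `S` a module-finite `R`-algebra.  If every finite system of polynomial equations over
`R` admits an Artin bound with respect to `(R, I)`, then every finite system of polynomial
equations over `S` admits an Artin bound with respect to `(S, IS)`. -/
theorem sap_of_moduleFinite
    (R : Type*) [CommRing R] [IsNoetherianRing R] (I : Ideal R)
    (S : Type*) [CommRing S] [Algebra R S] [Module.Finite R S]
    (hR : ∀ (N r : ℕ) (f : Fin r → MvPolynomial (Fin N) R), ∃ β : ℕ → ℕ, IsArtinBound I f β) :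
    ∀ (N r : ℕ) (g : Fin r → MvPolynomial (Fin N) S),
      ∃ β : ℕ → ℕ, IsArtinBound (I.map (algebraMap R S)) g β := by
  intro N r g
  obtain ⟨m, s, hs⟩ := Module.Finite.exists_fin (R := R) (M := S)
  have hrep : ∀ x : S, ∃ c : Fin m → R, ∑ k, c k • s k = x := fun x =>
    (Submodule.mem_span_range_iff_exists_fun R).1 (hs ▸ Submodule.mem_top)
  choose P hP using fun i => key_repr s hs (g i)
  obtain ⟨p, w, hw0, hwspan⟩ := exists_kernel_gens (R := R) s
  let e1 : (Fin N × Fin m) ⊕ (Fin r × Fin p) ≃ Fin (N * m + r * p) :=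
    (Equiv.sumCongr finProdFinEquiv finProdFinEquiv).trans finSumFinEquiv
  let F : Fin r × Fin m → MvPolynomial ((Fin N × Fin m) ⊕ (Fin r × Fin p)) R :=
    fun ik => rename Sum.inl (P ik.1 ik.2) - ∑ u, X (Sum.inr (ik.1, u)) * C (w u ik.2)
  let F' : Fin (r * m) → MvPolynomial (Fin (N * m + r * p)) R :=
    fun q => rename e1 (F (finProdFinEquiv.symm q))
  obtain ⟨β, hβ⟩ := hR (N * m + r * p) (r * m) F'
  refine ⟨β, fun n a ha => ?_⟩
  choose y hy using fun j => hrep (a j)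
  set Y : Fin N × Fin m → R := fun jk => y jk.1 jk.2 with hY
  have ha' : ∀ j, a j = ∑ k, Y (j, k) • s k := fun j => (hy j).symm
  have haf : (fun j => ∑ k, Y (j, k) • s k) = a := by funext j; exact (ha' j).symm
  have hmem : ∀ i, eval a (g i) ∈ (I ^ β n).map (algebraMap R S) := by
    intro i; rw [Ideal.map_pow]; exact ha i
  choose z hz1 hz2 using fun i => exists_ideal_coords s hs _ (hmem i)
  have hker : ∀ i, ∑ k, (eval Y (P i k) - z i k) • s k = 0 := by
    intro i
    simp only [sub_smul, Finset.sum_sub_distrib]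
    rw [← hP i Y, haf, hz2 i, sub_self]
  choose t ht using fun i => hwspan (fun k => eval Y (P i k) - z i k) (hker i)
  let α : (Fin N × Fin m) ⊕ (Fin r × Fin p) → R :=
    Sum.elim Y (fun iu => t iu.1 iu.2)
  have hFα : ∀ ik : Fin r × Fin m, eval α (F ik) = z ik.1 ik.2 := by
    rintro ⟨i, k⟩
    simp only [F, map_sub, eval_rename, map_sum, eval_mul, eval_X, eval_C]
    have h1 : eval (α ∘ Sum.inl) (P i k) = eval Y (P i k) := rfl
    have h2 : ∀ u, α (Sum.inr (i, u)) = t i u := fun u => rfl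
    rw [h1]
    simp only [h2]
    rw [← ht i k]
    exact sub_sub_cancel _ _
  have happrox : ∀ q, eval (α ∘ e1.symm) (F' q) ∈ I ^ β n := by
    intro q
    simp only [F', eval_rename]
    have hcomp : (α ∘ e1.symm) ∘ e1 = α := by
      funext v; simp
    rw [hcomp, hFα]
    exact hz1 _ _
  obtain ⟨b', hb'0, hb'n⟩ := hβ n (α ∘ e1.symm) happrox
  set α' : (Fin N × Fin m) ⊕ (Fin r × Fin p) → R := b' ∘ e1 with hα'
  have hdiff : ∀ v, α v - α' v ∈ I ^ n := by
    intro v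
    have h := hb'n (e1 v)
    simpa [hα'] using h
  have hF0 : ∀ ik : Fin r × Fin m, eval α' (F ik) = 0 := by
    rintro ⟨i, k⟩
    have h := hb'0 (finProdFinEquiv (i, k))
    simp only [F', Equiv.symm_apply_apply, eval_rename] at h
    exact h
  set Y' : Fin N × Fin m → R := fun jk => α' (Sum.inl jk) with hY'
  set t' : Fin r → Fin p → R := fun i u => α' (Sum.inr (i, u)) with ht'
  have hPY' : ∀ i k, eval Y' (P i k) = ∑ u, t' i u * w u k := by
    intro i k
    have h := hF0 (i, k)
    simp only [F, map_sub, eval_rename, map_sum, eval_mul, eval_X, eval_C,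
      sub_eq_zero] at h
    exact h
  refine ⟨fun j => ∑ k, Y' (j, k) • s k, fun i => ?_, fun j => ?_⟩
  · rw [hP i Y']
    calc ∑ k, eval Y' (P i k) • s k
        = ∑ k, ∑ u, (t' i u * w u k) • s k := by
          refine Finset.sum_congr rfl fun k _ => ?_
          rw [hPY', Finset.sum_smul]
      _ = ∑ u, t' i u • ∑ k, w u k • s k := by
          rw [Finset.sum_comm]
          refine Finset.sum_congr rfl fun u _ => ?_
          rw [Finset.smul_sum]
          refine Finset.sum_congr rfl fun k _ => ?_
          rw [smul_smul]
      _ = 0 := by simp [hw0]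
  · rw [ha' j, ← Finset.sum_sub_distrib]
    refine Submodule.sum_mem _ fun k _ => ?_
    rw [← sub_smul, Algebra.smul_def, ← Ideal.map_pow]
    exact Ideal.mul_mem_right _ _ (Ideal.mem_map_of_mem _ (hdiff (Sum.inl (j, k))))
end

section
/- Let R be a Noetherian ring, I ⊆ R an ideal, and S a module-finite R-algebra. If every finite system of polynomial equations over R admits an Artin bound with respect to (R,I) that is bounded above by a linear function of n, then every finite system of polynomial equations over S admits an Artin bound with respect to (S,IS) that is bounded above by a linear function of n. -/
open MvPolynomial

section Aux

variable {R S : Type*} [CommRing R] [CommRing S] [Algebra R S]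

/-- Decomposition of a polynomial over `S` with respect to module generators of `S`:
there are polynomials over `R` giving the coordinates of the evaluation at points
coming from `R`. -/
lemma lap_exists_decomp {m : ℕ} (s : Fin m → S) (rep : S → Fin m → R)
    (hrep : ∀ x : S, ∑ p, algebraMap R S (rep x p) * s p = x)
    {σ : Type*} (h : MvPolynomial σ S) :
    ∃ G : Fin m → MvPolynomial σ R, ∀ y : σ → R,
      eval (fun v => algebraMap R S (y v)) h
        = ∑ p, algebraMap R S (eval y (G p)) * s p := by
  refine ⟨fun p => ∑ d ∈ h.support, monomial d (rep (h.coeff d) p), fun y => ?_⟩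
  have key : ∀ d : σ →₀ ℕ,
      coeff d h * ∏ i ∈ d.support, (algebraMap R S (y i)) ^ d i
        = ∑ p, algebraMap R S (rep (coeff d h) p * ∏ i ∈ d.support, y i ^ d i) * s p := by
    intro d
    conv_lhs => rw [← hrep (coeff d h)]
    rw [Finset.sum_mul]
    refine Finset.sum_congr rfl fun p _ => ?_
    rw [map_mul, map_prod]
    simp only [map_pow]
    ring
  rw [eval_eq]
  calc ∑ d ∈ h.support, coeff d h * ∏ i ∈ d.support, (algebraMap R S (y i)) ^ d i
      = ∑ d ∈ h.support, ∑ p,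
          algebraMap R S (rep (coeff d h) p * ∏ i ∈ d.support, y i ^ d i) * s p :=
        Finset.sum_congr rfl fun d _ => key d
    _ = ∑ p, ∑ d ∈ h.support,
          algebraMap R S (rep (coeff d h) p * ∏ i ∈ d.support, y i ^ d i) * s p :=
        Finset.sum_comm
    _ = ∑ p, algebraMap R S (eval y (∑ d ∈ h.support, monomial d (rep (h.coeff d) p))) * s p := by
        refine Finset.sum_congr rfl fun p _ => ?_
        rw [map_sum, map_sum, Finset.sum_mul]
        refine Finset.sum_congr rfl fun d _ => ?_
        rw [eval_monomial, Finsupp.prod]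

/-- Elements of `J.map (algebraMap R S)` can be written as combinations of the
module generators of `S` with coefficients in `J`. -/
lemma lap_mem_map {m : ℕ} (s : Fin m → S) (hsp : Submodule.span R (Set.range s) = ⊤)
    (J : Ideal R) {x : S} (hx : x ∈ J.map (algebraMap R S)) :
    ∃ u : Fin m → R, (∀ p, u p ∈ J) ∧ x = ∑ p, algebraMap R S (u p) * s p := by
  have h1 : x ∈ J • (⊤ : Submodule R S) := by
    rw [Ideal.smul_top_eq_map]; exact hx
  rw [← hsp] at h1
  obtain ⟨a, ha, hax⟩ := (Submodule.mem_ideal_smul_span_iff_exists_sum J s x).mp h1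
  refine ⟨a, fun p => ha p, ?_⟩
  rw [← hax, Finsupp.sum_fintype]
  · exact Finset.sum_congr rfl fun p _ => (Algebra.smul_def _ _)
  · intro i; exact zero_smul R (s i)

end Aux

/-- **Lemma (LAP ascends along module-finite extensions).** Let `R` be Noetherian, `I ⊆ R` an
ideal and `S` a module-finite `R`-algebra.  If every finite system of polynomial equations over
`R` admits an Artin bound with respect to `(R, I)` bounded above by a linear function of `n`,
then every finite system of polynomial equations over `S` admits an Artin bound with respect to
`(S, IS)` bounded above by a linear function of `n`. -/
theorem lap_of_moduleFinite
    (R : Type*) [CommRing R] [IsNoetherianRing R] (I : Ideal R)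
    (S : Type*) [CommRing S] [Algebra R S] [Module.Finite R S]
    (hR : ∀ (N r : ℕ) (f : Fin r → MvPolynomial (Fin N) R),
      ∃ (β : ℕ → ℕ) (c e : ℕ), IsArtinBound I f β ∧ ∀ n, β n ≤ c * n + e) :
    ∀ (N r : ℕ) (g : Fin r → MvPolynomial (Fin N) S),
      ∃ (β : ℕ → ℕ) (c e : ℕ),
        IsArtinBound (I.map (algebraMap R S)) g β ∧ ∀ n, β n ≤ c * n + e := by
  intro N r g
  -- module generators of `S`
  obtain ⟨m, s, hs⟩ := Module.Finite.exists_fin (R := R) (M := S)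
  have hrepex : ∀ x : S, ∃ cc : Fin m → R, ∑ p, algebraMap R S (cc p) * s p = x := by
    intro x
    have hx : x ∈ Submodule.span R (Set.range s) := hs ▸ Submodule.mem_top
    obtain ⟨cc, hcc⟩ := (Submodule.mem_span_range_iff_exists_fun R).mp hx
    exact ⟨cc, by rw [← hcc]; exact Finset.sum_congr rfl fun p _ => (Algebra.smul_def _ _).symm⟩
  choose rep hrep using hrepex
  -- the presentation `π : R^m → S` and its kernel
  set π : (Fin m → R) →ₗ[R] S :=
    { toFun := fun v => ∑ p, algebraMap R S (v p) * s p
      map_add' := by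
        intro v w
        simp [map_add, add_mul, Finset.sum_add_distrib]
      map_smul' := by
        intro c v
        simp [Algebra.smul_def, Finset.mul_sum, mul_assoc] } with hπ
  have hπapp : ∀ v : Fin m → R, π v = ∑ p, algebraMap R S (v p) * s p := fun v => rfl
  obtain ⟨q, k, hk⟩ := Submodule.fg_iff_exists_fin_generating_family.mp
    (IsNoetherian.noetherian (LinearMap.ker π))
  have hkker : ∀ t : Fin q, ∑ p, algebraMap R S (k t p) * s p = 0 := by
    intro t
    have : k t ∈ LinearMap.ker π := hk ▸ Submodule.subset_span ⟨t, rfl⟩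
    simpa [hπapp] using this
  -- substitute `X j = ∑ kk, Y (j, kk) * s kk` in `g i`
  set h : Fin r → MvPolynomial (Fin N × Fin m) S :=
    fun i => aeval (R := S) (fun j : Fin N => ∑ kk : Fin m, C (s kk) * X (j, kk)) (g i) with hh
  have hcomp : ∀ (i : Fin r) (y : Fin N × Fin m → R),
      eval (fun v => algebraMap R S (y v)) (h i)
        = eval (fun j => ∑ kk, algebraMap R S (y (j, kk)) * s kk) (g i) := by
    intro i y
    have := congrFun (congrArg (fun φ : MvPolynomial (Fin N) S →ₐ[S] S => (φ : MvPolynomial (Fin N) S → S))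
      (comp_aeval (R := S) (fun j : Fin N => ∑ kk : Fin m, C (s kk) * X (j, kk))
        (aeval (R := S) (fun v : Fin N × Fin m => algebraMap R S (y v))))) (g i)
    simp only [AlgHom.coe_comp, Function.comp_apply] at this
    have h2 : ∀ (p : MvPolynomial (Fin N × Fin m) S),
        aeval (R := S) (fun v : Fin N × Fin m => algebraMap R S (y v)) p
          = eval (fun v => algebraMap R S (y v)) p := fun p => rfl
    rw [hh]
    rw [h2] at this
    rw [this]
    have h3 : (fun j : Fin N =>
        aeval (R := S) (fun v : Fin N × Fin m => algebraMap R S (y v))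
          (∑ kk : Fin m, C (s kk) * X (j, kk)))
        = fun j => ∑ kk, algebraMap R S (y (j, kk)) * s kk := by
      funext j
      simp [mul_comm]
    rw [h3]
    rfl
  -- coordinate polynomials of the substituted system
  have hGex : ∀ i : Fin r, ∃ G : Fin m → MvPolynomial (Fin N × Fin m) R,
      ∀ y : Fin N × Fin m → R,
        eval (fun v => algebraMap R S (y v)) (h i)
          = ∑ p, algebraMap R S (eval y (G p)) * s p :=
    fun i => lap_exists_decomp s rep hrep (h i)
  choose G hG using hGex
  have heva : ∀ (y : Fin N × Fin m → R) (i : Fin r),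
      eval (fun j => ∑ kk, algebraMap R S (y (j, kk)) * s kk) (g i)
        = ∑ p, algebraMap R S (eval y (G i p)) * s p :=
    fun y i => (hcomp i y).symm.trans (hG i y)
  -- the system over `R`
  set V := (Fin N × Fin m) ⊕ (Fin r × Fin q) with hV
  set F : Fin r × Fin m → MvPolynomial V R :=
    fun ip => rename Sum.inl (G ip.1 ip.2)
      - ∑ t : Fin q, X (Sum.inr (ip.1, t)) * C (k t ip.2) with hF
  have hFeval : ∀ (w : V → R) (i : Fin r) (p : Fin m),
      eval w (F (i, p)) = eval (w ∘ Sum.inl) (G i p) - ∑ t, w (Sum.inr (i, t)) * k t p := by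
    intro w i p
    simp [hF, eval_rename]
  set eE : Fin r × Fin m ≃ Fin (r * m) := finProdFinEquiv with heE
  set eV : V ≃ Fin (N * m + r * q) :=
    (Equiv.sumCongr finProdFinEquiv finProdFinEquiv).trans finSumFinEquiv with heV
  set f' : Fin (r * m) → MvPolynomial (Fin (N * m + r * q)) R :=
    fun ee => rename eV (F (eE.symm ee)) with hf'
  obtain ⟨β, c, e, hβ, hlin⟩ := hR (N * m + r * q) (r * m) f'
  refine ⟨β, c, e, ?_, hlin⟩
  intro n a hag
  -- coordinates of the approximate solution
  set y0 : Fin N × Fin m → R := fun v => rep (a v.1) v.2 with hy0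
  have ha' : a = fun j => ∑ kk, algebraMap R S (y0 (j, kk)) * s kk := by
    funext j; exact (hrep (a j)).symm
  -- coordinates of the approximate values
  have huex : ∀ i : Fin r, ∃ u : Fin m → R, (∀ p, u p ∈ I ^ β n) ∧
      eval a (g i) = ∑ p, algebraMap R S (u p) * s p := by
    intro i
    have : eval a (g i) ∈ (I ^ β n).map (algebraMap R S) := by
      rw [Ideal.map_pow]; exact hag i
    exact lap_mem_map s hs _ this
  choose u hu hua using huex
  -- the errors lie in the kernel
  have hzker : ∀ i : Fin r, (fun p => eval y0 (G i p) - u i p) ∈ LinearMap.ker π := by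
    intro i
    have h1 : eval a (g i) = ∑ p, algebraMap R S (eval y0 (G i p)) * s p := by
      conv_lhs => rw [ha']
      exact heva y0 i
    have : π (fun p => eval y0 (G i p) - u i p) = 0 := by
      rw [hπapp]
      have : ∑ p, algebraMap R S (eval y0 (G i p) - u i p) * s p
          = (∑ p, algebraMap R S (eval y0 (G i p)) * s p)
            - ∑ p, algebraMap R S (u i p) * s p := by
        rw [← Finset.sum_sub_distrib]
        exact Finset.sum_congr rfl fun p _ => by rw [map_sub, sub_mul]
      rw [this, ← h1, ← hua i, sub_self]
    exact this
  have hlamex : ∀ i : Fin r, ∃ lam : Fin q → R,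
      ∀ p, ∑ t, lam t * k t p = eval y0 (G i p) - u i p := by
    intro i
    have : (fun p => eval y0 (G i p) - u i p) ∈ Submodule.span R (Set.range k) :=
      hk ▸ hzker i
    obtain ⟨lam, hlam⟩ := (Submodule.mem_span_range_iff_exists_fun R).mp this
    refine ⟨lam, fun p => ?_⟩
    have := congrFun hlam p
    simpa using this
  choose lam hlam using hlamex
  -- the approximate solution of the system over `R`
  set w0 : V → R := Sum.elim y0 (fun it => lam it.1 it.2) with hw0
  set a' : Fin (N * m + r * q) → R := w0 ∘ eV.symm with ha'0
  have haeV : ∀ v : V, a' (eV v) = w0 v := by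
    intro v; simp [ha'0]
  have happrox : ∀ ee, eval a' (f' ee) ∈ I ^ β n := by
    intro ee
    rw [hf', eval_rename]
    have hcmp : a' ∘ eV = w0 := by funext v; exact haeV v
    rw [hcmp]
    obtain ⟨i, p⟩ := eE.symm ee
    rw [hFeval]
    have h1 : (w0 ∘ Sum.inl) = y0 := rfl
    have h2 : ∀ t, w0 (Sum.inr (i, t)) = lam i t := fun t => rfl
    rw [h1]
    have : ∑ t, w0 (Sum.inr (i, t)) * k t p = eval y0 (G i p) - u i p := by
      rw [show (∑ t, w0 (Sum.inr (i, t)) * k t p) = ∑ t, lam i t * k t p from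
        Finset.sum_congr rfl fun t _ => by rw [h2], hlam i p]
    rw [this]
    have : eval y0 (G i p) - (eval y0 (G i p) - u i p) = u i p := by ring
    rw [this]
    exact hu i p
  obtain ⟨b', hb'0, hb'c⟩ := hβ n a' happrox
  set w1 : V → R := b' ∘ eV with hw1
  set y1 : Fin N × Fin m → R := fun v => w1 (Sum.inl v) with hy1
  set b : Fin N → S := fun j => ∑ kk, algebraMap R S (y1 (j, kk)) * s kk with hb
  have hFw1 : ∀ (i : Fin r) (p : Fin m), eval w1 (F (i, p)) = 0 := by
    intro i p
    have := hb'0 (eE (i, p))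
    rw [hf', eval_rename] at this
    have hcmp : b' ∘ eV = w1 := rfl
    rw [hcmp, Equiv.symm_apply_apply] at this
    exact this
  refine ⟨b, ?_, ?_⟩
  · -- exact solution
    intro i
    have h1 : eval b (g i) = ∑ p, algebraMap R S (eval y1 (G i p)) * s p := heva y1 i
    have h2 : ∀ p, eval y1 (G i p) = ∑ t, w1 (Sum.inr (i, t)) * k t p := by
      intro p
      have := hFw1 i p
      rw [hFeval] at this
      have hyl : (w1 ∘ Sum.inl) = y1 := rfl
      rw [hyl] at this
      exact sub_eq_zero.mp this
    rw [h1]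
    calc ∑ p, algebraMap R S (eval y1 (G i p)) * s p
        = ∑ p, ∑ t, algebraMap R S (w1 (Sum.inr (i, t))) * (algebraMap R S (k t p) * s p) := by
          refine Finset.sum_congr rfl fun p _ => ?_
          rw [h2 p, map_sum, Finset.sum_mul]
          exact Finset.sum_congr rfl fun t _ => by rw [map_mul, mul_assoc]
      _ = ∑ t, algebraMap R S (w1 (Sum.inr (i, t))) * ∑ p, algebraMap R S (k t p) * s p := by
          rw [Finset.sum_comm]
          exact Finset.sum_congr rfl fun t _ => (Finset.mul_sum _ _ _).symm
      _ = 0 := by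
          refine Finset.sum_eq_zero fun t _ => ?_
          rw [hkker t, mul_zero]
  · -- congruence
    intro j
    have hdiff : ∀ kk : Fin m, y0 (j, kk) - y1 (j, kk) ∈ I ^ n := by
      intro kk
      have h1 : y0 (j, kk) = a' (eV (Sum.inl (j, kk))) := (haeV (Sum.inl (j, kk))).symm
      have h2 : y1 (j, kk) = b' (eV (Sum.inl (j, kk))) := rfl
      rw [h1, h2]
      exact hb'c _
    have heq : a j - b j = ∑ kk, algebraMap R S (y0 (j, kk) - y1 (j, kk)) * s kk := by
      conv_lhs => rw [ha']
      rw [hb, ← Finset.sum_sub_distrib]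
      exact Finset.sum_congr rfl fun kk _ => by rw [map_sub, sub_mul]
    rw [heq]
    refine Ideal.sum_mem _ fun kk _ => ?_
    refine Ideal.mul_mem_right _ _ ?_
    rw [← Ideal.map_pow]
    exact Ideal.mem_map_of_mem _ (hdiff kk)
end

section
/- Let (R,m) be a Noetherian local ring with m-adic completion R̂, and let f = (f₁,…,f_r) be a system of polynomials in R[X₁,…,X_N]. Suppose f has the Artin approximation property over R: for each c ∈ ℕ and each â ∈ R̂^N with fᵢ(â) = 0 for all i, there exists a ∈ R^N with fᵢ(a) = 0 for all i and a ≡ â (mod m^c R̂^N). If β : ℕ → ℕ is an Artin bound for f viewed as a system over (R̂, mR̂), then β is also an Artin bound for f over (R,m). In particular, if f has SAP (respectively LAP) over R̂, then f has SAP (respectively LAP) over R. -/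
open MvPolynomial IsLocalRing

theorem eval_map_comp_algebraMap {R S : Type*} [CommRing R] [CommRing S] [Algebra R S]
    {σ : Type*} (a : σ → R) (p : MvPolynomial σ R) :
    eval (fun j => algebraMap R S (a j)) (p.map (algebraMap R S))
      = algebraMap R S (eval a p) := by
  rw [eval_map]
  have h := eval₂_comp_left (algebraMap R S) (RingHom.id R) a p
  simpa [eval₂_id, Function.comp_def] using h.symm

/-- **Lemma.** Let `(R, m)` be a Noetherian local ring with `m`-adic completion `R̂` and let
`f = (f₁,…,f_r) ⊆ R[X₁,…,X_N]` be a system with the Artin approximation property over `R`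
(every exact solution over `R̂` is approximated arbitrarily well by exact solutions over `R`).
If `β` is an Artin bound for `f` viewed over `(R̂, m R̂)`, then `β` is an Artin bound for `f`
over `(R, m)`. -/
theorem isArtinBound_of_isArtinBound_adicCompletion
    (R : Type*) [CommRing R] [IsNoetherianRing R] [IsLocalRing R]
    (N r : ℕ) (f : Fin r → MvPolynomial (Fin N) R)
    (hAP : ∀ c : ℕ, ∀ ahat : Fin N → AdicCompletion (maximalIdeal R) R,
      (∀ i, eval ahat ((f i).map (algebraMap R (AdicCompletion (maximalIdeal R) R))) = 0) →
      ∃ a : Fin N → R, (∀ i, eval a (f i) = 0) ∧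
        ∀ j, algebraMap R (AdicCompletion (maximalIdeal R) R) (a j) - ahat j ∈
          ((maximalIdeal R).map (algebraMap R (AdicCompletion (maximalIdeal R) R))) ^ c)
    (β : ℕ → ℕ)
    (hβ : IsArtinBound ((maximalIdeal R).map (algebraMap R (AdicCompletion (maximalIdeal R) R)))
      (fun i => (f i).map (algebraMap R (AdicCompletion (maximalIdeal R) R))) β) :
    IsArtinBound (maximalIdeal R) f β := by
  set I := maximalIdeal R
  set Rh := AdicCompletion I R
  set φ := algebraMap R Rh with hφ
  intro n a ha
  -- lift the approximate solution to the completion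
  have ha' : ∀ i, eval (fun j => φ (a j)) ((f i).map φ) ∈ (I.map φ) ^ β n := by
    intro i
    rw [eval_map_comp_algebraMap, ← Ideal.map_pow]
    exact Ideal.mem_map_of_mem φ (ha i)
  obtain ⟨bh, hbh0, hbhn⟩ := hβ n (fun j => φ (a j)) ha'
  obtain ⟨b, hb0, hbn⟩ := hAP n bh hbh0
  refine ⟨b, hb0, fun j => ?_⟩
  have hmem : φ (a j - b j) ∈ (I.map φ) ^ n := by
    have : φ (a j - b j) = (φ (a j) - bh j) + (bh j - φ (b j)) := by
      rw [map_sub]; ring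
    rw [this]
    exact Ideal.add_mem _ (hbhn j) (by simpa [neg_sub] using neg_mem (hbn j))
  -- push down via evalₐ
  have hker : (I.map φ) ^ n ≤ RingHom.ker (AdicCompletion.evalₐ I n).toRingHom := by
    rw [← Ideal.map_pow]
    rw [Ideal.map_le_iff_le_comap]
    intro x hx
    simp only [Ideal.mem_comap, RingHom.mem_ker]
    show AdicCompletion.evalₐ I n (φ x) = 0
    rw [AlgHom.commutes]
    exact Ideal.Quotient.eq_zero_iff_mem.mpr hx
  have := hker hmem
  rw [RingHom.mem_ker] at this
  have h0 : AdicCompletion.evalₐ I n (φ (a j - b j)) = 0 := this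
  rw [AlgHom.commutes] at h0
  exact Ideal.Quotient.eq_zero_iff_mem.mp h0
end

section
/- Let R be a Noetherian ring, X = (X₁,…,X_N) variables, and f = (f₁,…,f_r) ⊆ R[X]. Suppose the ideal H_{f/R} of R[X] is generated by g₁,…,g_M. Let Y = (Y₁,…,Y_M) and Z = (Z₁,…,Z_T) be new variables, let h ∈ R[X,Z], and set G = h + Y₁g₁ + … + Y_M g_M ∈ R[X,Y,Z]. Then H_{(f₁,…,f_r,G)/R} ⊇ (H_{f/R})² R[X,Y,Z]. -/
open MvPolynomial

/-- Elkik's ideal `H_{f/R}`: the sum over `1 ≤ i₁ < ⋯ < i_p ≤ r` of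
`Δ(i₁,…,i_p) · ((f_{i₁},…,f_{i_p}) : (f₁,…,f_r))`, where `Δ(i₁,…,i_p)` is generated by the
`p × p` minors of the Jacobian matrix `(∂f_{i_j}/∂X_k)`. -/
noncomputable def elkikH {R : Type*} [CommRing R] {σ : Type*} [DecidableEq σ] {r : ℕ}
    (f : Fin r → MvPolynomial σ R) : Ideal (MvPolynomial σ R) :=
  ⨆ (p : ℕ) (_ : 0 < p) (rows : Fin p → Fin r) (_ : StrictMono rows),
    Ideal.span {d | ∃ cols : Fin p → σ,
        d = (Matrix.of fun j k : Fin p => pderiv (cols k) (f (rows j))).det} *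
      (Ideal.span (Set.range (f ∘ rows))).colon (Ideal.span (Set.range f))

lemma pderiv_rename_of_notMem_range {R σ τ : Type*} [CommSemiring R] [DecidableEq τ]
    {u : σ → τ} {i : τ} (hi : i ∉ Set.range u) (q : MvPolynomial σ R) :
    pderiv i (rename u q) = 0 := by
  classical
  apply pderiv_eq_zero_of_notMem_vars
  intro hmem
  obtain ⟨x, -, hx⟩ := mem_vars_rename u q hmem
  exact hi ⟨x, hx⟩

lemma strictMono_snoc_last {p r : ℕ} {rows : Fin p → Fin r} (hm : StrictMono rows) :
    StrictMono (Fin.snoc (Fin.castSucc ∘ rows) (Fin.last r) : Fin (p + 1) → Fin (r + 1)) := by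
  intro a b hab
  induction b using Fin.lastCases with
  | last =>
    induction a using Fin.lastCases with
    | last => exact absurd hab (lt_irrefl _)
    | cast a₀ => simpa using Fin.castSucc_lt_last (rows a₀)
  | cast b₀ =>
    induction a using Fin.lastCases with
    | last => exact absurd hab (not_lt_of_gt (Fin.castSucc_lt_last b₀))
    | cast a₀ =>
      have h1 : a₀ < b₀ := by simpa using hab
      simpa using Fin.castSucc_lt_castSucc_iff.2 (hm h1)

lemma elkikH_core
    {R : Type*} [CommRing R]
    {N r M T : ℕ} {f : Fin r → MvPolynomial (Fin N) R}
    (g : Fin M → MvPolynomial (Fin N) R)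
    (h : MvPolynomial (Fin N ⊕ Fin T) R)
    (G : MvPolynomial (Fin N ⊕ (Fin M ⊕ Fin T)) R)
    (hGdef : G = rename (Sum.map id (Sum.inr : Fin T → Fin M ⊕ Fin T)) h +
          ∑ j : Fin M, X (Sum.inr (Sum.inl j)) * rename Sum.inl (g j))
    (F : Fin (r + 1) → MvPolynomial (Fin N ⊕ (Fin M ⊕ Fin T)) R)
    (hFdef : F = Fin.snoc (fun i => rename (Sum.inl : Fin N → Fin N ⊕ (Fin M ⊕ Fin T)) (f i)) G)
    (j : Fin M) (p : ℕ) (rows : Fin p → Fin r) (hrows : StrictMono rows)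
    (cols : Fin p → Fin N)
    (a₀ : MvPolynomial (Fin N) R)
    (ha₀ : a₀ ∈ (Ideal.span (Set.range (f ∘ rows))).colon (Ideal.span (Set.range f))) :
    rename (Sum.inl : Fin N → Fin N ⊕ (Fin M ⊕ Fin T))
        ((Matrix.of fun a b : Fin p => pderiv (cols b) (f (rows a))).det) *
      (rename (Sum.inl : Fin N → Fin N ⊕ (Fin M ⊕ Fin T)) a₀ *
        rename (Sum.inl : Fin N → Fin N ⊕ (Fin M ⊕ Fin T)) (g j)) ∈ elkikH F := by
  classical
  set φ : MvPolynomial (Fin N) R →ₐ[R] MvPolynomial (Fin N ⊕ (Fin M ⊕ Fin T)) R :=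
    rename (Sum.inl : Fin N → Fin N ⊕ (Fin M ⊕ Fin T)) with hφ
  set rows' : Fin (p + 1) → Fin (r + 1) :=
    Fin.snoc (Fin.castSucc ∘ rows) (Fin.last r) with hrows'def
  set cols' : Fin (p + 1) → Fin N ⊕ (Fin M ⊕ Fin T) :=
    Fin.cons (Sum.inr (Sum.inl j)) (Sum.inl ∘ cols) with hcols'def
  have hrowsmono : StrictMono rows' := strictMono_snoc_last hrows
  have hFcast : ∀ i : Fin r, F (Fin.castSucc i) = φ (f i) := by
    intro i; rw [hFdef]; simp
  have hFlast : F (Fin.last r) = G := by rw [hFdef]; simp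
  have hYnotX : (Sum.inr (Sum.inl j) : Fin N ⊕ (Fin M ⊕ Fin T)) ∉
      Set.range (Sum.inl : Fin N → Fin N ⊕ (Fin M ⊕ Fin T)) := by simp
  have hYnotH : (Sum.inr (Sum.inl j) : Fin N ⊕ (Fin M ⊕ Fin T)) ∉
      Set.range (Sum.map (id : Fin N → Fin N) (Sum.inr : Fin T → Fin M ⊕ Fin T)) := by
    rintro ⟨(x | t), hw⟩ <;> simp at hw
  have hpderivG : pderiv (Sum.inr (Sum.inl j)) G = φ (g j) := by
    rw [hGdef, map_add, pderiv_rename_of_notMem_range hYnotH, zero_add, map_sum,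
      Finset.sum_eq_single j]
    · rw [pderiv_mul, pderiv_X_self, pderiv_rename_of_notMem_range hYnotX, one_mul, mul_zero,
        add_zero]
    · intro m _ hm
      rw [pderiv_mul, pderiv_X_of_ne (by simpa using hm),
        pderiv_rename_of_notMem_range hYnotX, zero_mul, mul_zero, add_zero]
    · intro hj; exact absurd (Finset.mem_univ j) hj
  set Mat : Matrix (Fin (p + 1)) (Fin (p + 1)) (MvPolynomial (Fin N ⊕ (Fin M ⊕ Fin T)) R) :=
    Matrix.of (fun a b : Fin (p + 1) => pderiv (cols' b) (F (rows' a))) with hMatdef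
  have hcol0cast : ∀ i : Fin p, Mat (Fin.castSucc i) 0 = 0 := by
    intro i
    have h1 : rows' (Fin.castSucc i) = Fin.castSucc (rows i) := by
      rw [hrows'def]; simp
    have h2 : cols' 0 = Sum.inr (Sum.inl j) := by rw [hcols'def]; simp
    rw [hMatdef]
    show pderiv (cols' 0) (F (rows' (Fin.castSucc i))) = 0
    rw [h1, h2, hFcast]
    exact pderiv_rename_of_notMem_range hYnotX _
  have hcol0last : Mat (Fin.last p) 0 = φ (g j) := by
    have h1 : rows' (Fin.last p) = Fin.last r := by rw [hrows'def]; simp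
    have h2 : cols' 0 = Sum.inr (Sum.inl j) := by rw [hcols'def]; simp
    rw [hMatdef]
    show pderiv (cols' 0) (F (rows' (Fin.last p))) = φ (g j)
    rw [h1, h2, hFlast, hpderivG]
  have hsubm : Mat.submatrix (Fin.last p).succAbove Fin.succ =
      (Matrix.of fun a b : Fin p => pderiv (cols b) (f (rows a))).map φ := by
    refine Matrix.ext fun a b => ?_
    have h1 : (Fin.last p).succAbove a = Fin.castSucc a := by
      rw [Fin.succAbove_last]
    have h2 : cols' (Fin.succ b) = Sum.inl (cols b) := by rw [hcols'def]; simp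
    have h3 : rows' (Fin.castSucc a) = Fin.castSucc (rows a) := by rw [hrows'def]; simp
    simp only [Matrix.submatrix_apply, h1, hMatdef, Matrix.of_apply, h3, h2, hFcast,
      Matrix.map_apply]
    exact pderiv_rename Sum.inl_injective _ _
  have hmapdet :
      ((Matrix.of fun a b : Fin p => pderiv (cols b) (f (rows a))).map φ).det =
      φ ((Matrix.of fun a b : Fin p => pderiv (cols b) (f (rows a))).det) :=
    (RingHom.map_det φ.toRingHom _).symm
  have hdet : Mat.det = (-1) ^ p *
      (φ (g j) * φ ((Matrix.of fun a b : Fin p => pderiv (cols b) (f (rows a))).det)) := by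
    rw [Matrix.det_succ_column_zero, Fin.sum_univ_castSucc]
    have hz : ∀ i : Fin p,
        (-1 : MvPolynomial (Fin N ⊕ (Fin M ⊕ Fin T)) R) ^ ((Fin.castSucc i : Fin (p+1)) : ℕ) *
          Mat (Fin.castSucc i) 0 *
          (Mat.submatrix (Fin.castSucc i).succAbove Fin.succ).det = 0 := by
      intro i; rw [hcol0cast i, mul_zero, zero_mul]
    rw [Finset.sum_congr rfl fun i _ => hz i, Finset.sum_const_zero, zero_add, hcol0last,
      hsubm, hmapdet, Fin.val_last, mul_assoc]
  -- colon membership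
  have hcolmem : φ a₀ ∈ (Ideal.span (Set.range (F ∘ rows'))).colon (Ideal.span (Set.range F)) := by
    rw [Submodule.mem_colon]
    intro b hb
    have hspan : Ideal.span (Set.range F) ≤
        (Ideal.span (Set.range (F ∘ rows'))).colon (Ideal.span {φ a₀}) := by
      rw [Ideal.span_le]
      rintro _ ⟨i, rfl⟩
      rw [SetLike.mem_coe, Ideal.mem_colon_span_singleton]
      induction i using Fin.lastCases with
      | last =>
        refine Ideal.mul_mem_right _ _ (Ideal.subset_span ⟨Fin.last p, ?_⟩)
        show F (rows' (Fin.last p)) = F (Fin.last r)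
        rw [hrows'def]; simp
      | cast i₀ =>
        have h1 : f i₀ * a₀ ∈ Ideal.span (Set.range (f ∘ rows)) := by
          have := Submodule.mem_colon.1 ha₀ (f i₀) (Ideal.subset_span ⟨i₀, rfl⟩)
          rwa [smul_eq_mul, mul_comm] at this
        have h2 : φ (f i₀ * a₀) ∈ Ideal.map φ (Ideal.span (Set.range (f ∘ rows))) :=
          Ideal.mem_map_of_mem _ h1
        rw [Ideal.map_span] at h2
        have h3 : φ '' Set.range (f ∘ rows) ⊆ Set.range (F ∘ rows') := by
          rintro _ ⟨_, ⟨i, rfl⟩, rfl⟩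
          refine ⟨Fin.castSucc i, ?_⟩
          show F (rows' (Fin.castSucc i)) = φ ((f ∘ rows) i)
          have h4 : rows' (Fin.castSucc i) = Fin.castSucc (rows i) := by rw [hrows'def]; simp
          rw [h4, hFcast]; rfl
        have h5 := Ideal.span_mono h3 h2
        rwa [hFcast, ← map_mul]
    have h6 := hspan hb
    rw [Ideal.mem_colon_span_singleton] at h6
    rwa [smul_eq_mul, mul_comm]
  -- assemble
  have hsup : Ideal.span {d | ∃ cols'' : Fin (p + 1) → Fin N ⊕ (Fin M ⊕ Fin T),
        d = (Matrix.of fun a b : Fin (p + 1) => pderiv (cols'' b) (F (rows' a))).det} *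
      (Ideal.span (Set.range (F ∘ rows'))).colon (Ideal.span (Set.range F)) ≤ elkikH F := by
    conv_rhs => rw [elkikH]
    refine le_trans ?_ (le_iSup _ (p + 1))
    refine le_trans ?_ (le_iSup _ p.succ_pos)
    refine le_trans ?_ (le_iSup _ rows')
    rw [iSup_pos hrowsmono]
  apply hsup
  have hsq : ((-1 : MvPolynomial (Fin N ⊕ (Fin M ⊕ Fin T)) R) ^ p) * ((-1) ^ p) = 1 := by
    rw [← mul_pow]; norm_num
  have heq : φ ((Matrix.of fun a b : Fin p => pderiv (cols b) (f (rows a))).det) *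
      (φ a₀ * φ (g j)) = ((-1) ^ p * Mat.det) * φ a₀ := by
    conv_rhs => rw [hdet, ← mul_assoc ((-1 : MvPolynomial (Fin N ⊕ (Fin M ⊕ Fin T)) R) ^ p)
      ((-1) ^ p), hsq, one_mul]
    ring
  rw [heq]
  exact Ideal.mul_mem_mul
    (Ideal.mul_mem_left _ _ (Ideal.subset_span ⟨cols', rfl⟩)) hcolmem

/-- **Lemma (enlarging the system).** Let `f = (f₁,…,f_r) ⊆ R[X]` with `H_{f/R}` generated by
`g₁,…,g_M`.  For new variables `Y = (Y₁,…,Y_M)`, `Z = (Z₁,…,Z_T)` and any `h ∈ R[X,Z]`, set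
`G = h + Y₁g₁ + ⋯ + Y_M g_M ∈ R[X,Y,Z]`.  Then
`H_{(f₁,…,f_r,G)/R} ⊇ (H_{f/R})² R[X,Y,Z]`. -/
theorem elkikH_enlarge
    (R : Type*) [CommRing R] [IsNoetherianRing R]
    (N r M T : ℕ) (f : Fin r → MvPolynomial (Fin N) R)
    (g : Fin M → MvPolynomial (Fin N) R)
    (hg : elkikH f = Ideal.span (Set.range g))
    (h : MvPolynomial (Fin N ⊕ Fin T) R) :
    (Ideal.map (rename (Sum.inl : Fin N → Fin N ⊕ (Fin M ⊕ Fin T))) (elkikH f)) ^ 2 ≤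
      elkikH (Fin.snoc (fun i => rename (Sum.inl : Fin N → Fin N ⊕ (Fin M ⊕ Fin T)) (f i))
        (rename (Sum.map id (Sum.inr : Fin T → Fin M ⊕ Fin T)) h +
          ∑ j : Fin M, X (Sum.inr (Sum.inl j)) * rename Sum.inl (g j))) := by
  classical
  set φ : MvPolynomial (Fin N) R →ₐ[R] MvPolynomial (Fin N ⊕ (Fin M ⊕ Fin T)) R :=
    rename (Sum.inl : Fin N → Fin N ⊕ (Fin M ⊕ Fin T)) with hφ
  set G : MvPolynomial (Fin N ⊕ (Fin M ⊕ Fin T)) R :=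
    rename (Sum.map id (Sum.inr : Fin T → Fin M ⊕ Fin T)) h +
      ∑ j : Fin M, X (Sum.inr (Sum.inl j)) * rename Sum.inl (g j) with hGdef
  set F : Fin (r + 1) → MvPolynomial (Fin N ⊕ (Fin M ⊕ Fin T)) R :=
    Fin.snoc (fun i => rename (Sum.inl : Fin N → Fin N ⊕ (Fin M ⊕ Fin T)) (f i)) G with hFdef
  -- key reduction
  have key : ∀ j : Fin M,
      Ideal.map φ (elkikH f) ≤ (elkikH F).colon (Ideal.span {φ (g j)}) := by
    intro j
    conv_lhs => rw [elkikH]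
    rw [Ideal.map_iSup]
    refine iSup_le fun p => ?_
    rw [Ideal.map_iSup]
    refine iSup_le fun hp => ?_
    rw [Ideal.map_iSup]
    refine iSup_le fun rows => ?_
    rw [Ideal.map_iSup]
    refine iSup_le fun hrows => ?_
    rw [Ideal.map_mul, Ideal.mul_le]
    intro d hd a₁ ha₁
    rw [Ideal.mem_colon_span_singleton, mul_assoc, ← Ideal.mem_colon_span_singleton]
    rw [Ideal.map_span] at hd
    refine Ideal.span_le.2 ?_ hd
    rintro _ ⟨δ, ⟨cols, rfl⟩, rfl⟩
    rw [SetLike.mem_coe, Ideal.mem_colon_span_singleton]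
    have hcomm : φ ((Matrix.of fun a b : Fin p => pderiv (cols b) (f (rows a))).det) *
        (a₁ * φ (g j)) = a₁ *
          (φ ((Matrix.of fun a b : Fin p => pderiv (cols b) (f (rows a))).det) * φ (g j)) := by
      ring
    rw [hcomm, ← Ideal.mem_colon_span_singleton]
    revert ha₁
    refine fun ha₁ => Ideal.map_le_iff_le_comap.2 ?_ ha₁
    intro a₀ ha₀
    rw [Ideal.mem_comap, Ideal.mem_colon_span_singleton]
    have hcomm2 : φ a₀ * (φ ((Matrix.of fun a b : Fin p => pderiv (cols b) (f (rows a))).det)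
          * φ (g j)) =
        φ ((Matrix.of fun a b : Fin p => pderiv (cols b) (f (rows a))).det) *
          (φ a₀ * φ (g j)) := by ring
    rw [hcomm2]
    exact elkikH_core g h G hGdef F hFdef j p rows hrows cols a₀ ha₀
  -- main argument
  rw [pow_two, Ideal.mul_le]
  intro a ha b hb
  rw [← Ideal.mem_colon_span_singleton]
  have ha' : a ∈ Ideal.span (φ '' Set.range g) := by
    rw [← Ideal.map_span, ← hg]; exact ha
  refine Ideal.span_le.2 ?_ ha'
  rintro _ ⟨_, ⟨j, rfl⟩, rfl⟩
  rw [SetLike.mem_coe, Ideal.mem_colon_span_singleton, mul_comm, ← Ideal.mem_colon_span_singleton]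
  exact key j hb
end

section
/- Let (R,m) be a Noetherian local domain and let α₁,…,α_k ∈ ℤ^N_{≥0} be nonzero multi-indices such that each single monomial X^{αᵢ} admits an Artin function β_•(X^{αᵢ}). Then for every n ∈ ℕ and every a ∈ R^N with a^{αᵢ} ∈ m^{M} for all i, where M = max_{1≤i≤k} β_n(X^{αᵢ}), there exists b ∈ R^N with b^{αᵢ} = 0 for all i and a ≡ b (mod m^n R^N); that is, β_n(X^{α₁},…,X^{α_k}) ≤ max_{1≤i≤k} β_n(X^{αᵢ}). -/
open IsLocalRing

/-- **Lemma.** Let `(R, m)` be a Noetherian local domain and `α₁,…,α_k` nonzero multi-indices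
such that each single monomial `X^{αᵢ}` admits an Artin bound `βf i`.  Then for every `n` and
every `a ∈ R^N` with `a^{αᵢ} ∈ m^M` for all `i`, where `M = max_i (βf i n)`, there is `b ∈ R^N`
with `b^{αᵢ} = 0` for all `i` and `a ≡ b (mod mⁿ R^N)`; that is,
`β_n(X^{α₁},…,X^{α_k}) ≤ max_i β_n(X^{αᵢ})`. -/
theorem monomial_system_bound_le_max
    (R : Type*) [CommRing R] [IsDomain R] [IsNoetherianRing R] [IsLocalRing R]
    (N k : ℕ) (α : Fin k → Fin N → ℕ) (hα : ∀ i, α i ≠ 0)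
    (βf : Fin k → ℕ → ℕ)
    (hβf : ∀ i : Fin k, ∀ n : ℕ, ∀ a : Fin N → R,
      (∏ j, a j ^ α i j) ∈ maximalIdeal R ^ βf i n →
      ∃ b : Fin N → R, (∏ j, b j ^ α i j) = 0 ∧ ∀ j, a j - b j ∈ maximalIdeal R ^ n) :
    ∀ n : ℕ, ∀ a : Fin N → R,
      (∀ i, (∏ j, a j ^ α i j) ∈ maximalIdeal R ^ (Finset.univ.sup fun i => βf i n)) →
      ∃ b : Fin N → R, (∀ i, (∏ j, b j ^ α i j) = 0) ∧
        ∀ j, a j - b j ∈ maximalIdeal R ^ n := by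
  classical
  intro n a ha
  have key : ∀ i, ∃ j, α i j ≠ 0 ∧ a j ∈ maximalIdeal R ^ n := by
    intro i
    obtain ⟨b, hb0, hbn⟩ := hβf i n a
      (Ideal.pow_le_pow_right (Finset.le_sup (Finset.mem_univ i)) (ha i))
    obtain ⟨j, -, hj⟩ := Finset.prod_eq_zero_iff.mp hb0
    have hne : α i j ≠ 0 := by
      intro h; rw [h, pow_zero] at hj; exact one_ne_zero hj
    have hbj : b j = 0 := pow_eq_zero_iff hne |>.mp hj
    refine ⟨j, hne, ?_⟩
    have := hbn j
    rwa [hbj, sub_zero] at this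
  refine ⟨fun j => if a j ∈ maximalIdeal R ^ n then 0 else a j, ?_, ?_⟩
  · intro i
    obtain ⟨j, hj, hjm⟩ := key i
    refine Finset.prod_eq_zero (Finset.mem_univ j) ?_
    simp [hjm, zero_pow hj]
  · intro j
    by_cases h : a j ∈ maximalIdeal R ^ n
    · simpa [if_pos h] using h
    · simp [h]
end

section
/- Let (R,m) be a Noetherian local domain whose m-adic completion is not an integral domain. Then the Artin function of the polynomial X₁X₂ over R does not exist: there exists n ∈ ℕ such that for every c ∈ ℕ there exist u, v ∈ R with uv ∈ m^c, u ∉ m^n, and v ∉ m^n. (Since R is a domain, every exact solution (u′,v′) of X₁X₂ = 0 has u′ = 0 or v′ = 0, so no exact solution is congruent to (u,v) modulo m^n.) -/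
open IsLocalRing

/-- **Lemma.** Let `(R, m)` be a Noetherian local domain whose `m`-adic completion is not a
domain.  Then the Artin function of `X₁X₂` does not exist: there is `n` such that for every `c`
there are `u, v ∈ R` with `uv ∈ m^c`, `u ∉ mⁿ` and `v ∉ mⁿ`. -/
theorem artin_function_of_product_does_not_exist
    (R : Type*) [CommRing R] [IsDomain R] [IsNoetherianRing R] [IsLocalRing R]
    (hnot : ¬ IsDomain (AdicCompletion (maximalIdeal R) R)) :
    ∃ n : ℕ, ∀ c : ℕ, ∃ u v : R,
      u * v ∈ maximalIdeal R ^ c ∧ u ∉ maximalIdeal R ^ n ∧ v ∉ maximalIdeal R ^ n := by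
  set I := maximalIdeal R with hI
  -- the completion is nontrivial
  have hnt : Nontrivial (AdicCompletion I R) := by
    refine nontrivial_of_ne 1 0 fun h => ?_
    have h1 : (1 : AdicCompletion I R).val 1 = (0 : AdicCompletion I R).val 1 := by rw [h]
    rw [AdicCompletion.val_one, AdicCompletion.val_zero] at h1
    have : (1 : R) ∈ (I ^ 1 • ⊤ : Ideal R) := by
      rwa [← Ideal.Quotient.eq_zero_iff_mem (I := (I ^ 1 • ⊤ : Ideal R))]
    rw [smul_eq_mul, Ideal.mul_top, pow_one] at this
    exact (IsLocalRing.maximalIdeal.isMaximal R).ne_top (Ideal.eq_top_iff_one I |>.mpr this)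
  -- extract zero divisors
  have hnzd : ¬ NoZeroDivisors (AdicCompletion I R) := by
    intro h
    exact hnot (NoZeroDivisors.to_isDomain _)
  have : ∃ x y : AdicCompletion I R, x * y = 0 ∧ x ≠ 0 ∧ y ≠ 0 := by
    by_contra h
    push_neg at h
    exact hnzd ⟨fun {x y} hxy => or_iff_not_imp_left.mpr (fun hx => h x y hxy hx)⟩
  obtain ⟨x, y, hxy, hx, hy⟩ := this
  -- find levels where components are nonzero
  have hex : ∀ z : AdicCompletion I R, z ≠ 0 → ∃ a : ℕ, z.val a ≠ 0 := by
    intro z hz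
    by_contra h
    push_neg at h
    exact hz (AdicCompletion.ext fun n => by rw [h n, AdicCompletion.val_zero, Pi.zero_apply])
  obtain ⟨a, ha⟩ := hex x hx
  obtain ⟨b, hb⟩ := hex y hy
  refine ⟨max a b, fun c => ?_⟩
  set n := max a b with hn
  set k := max n c with hk
  -- lift the components at level k
  obtain ⟨u, hu⟩ := Ideal.Quotient.mk_surjective (I := (I ^ k • ⊤ : Ideal R)) (x.val k)
  obtain ⟨v, hv⟩ := Ideal.Quotient.mk_surjective (I := (I ^ k • ⊤ : Ideal R)) (y.val k)
  have hnk : n ≤ k := le_max_left _ _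
  -- component compatibility: image of val k at lower level m is val m
  have hcompat : ∀ (z : AdicCompletion I R) (w : R) (m : ℕ) (hm : m ≤ k),
      Ideal.Quotient.mk (I ^ k • ⊤ : Ideal R) w = z.val k →
      Ideal.Quotient.mk (I ^ m • ⊤ : Ideal R) w = z.val m := by
    intro z w m hm hw
    have := z.property hm
    rw [← this, ← hw]
    rfl
  have hxn : ∀ m : ℕ, m ≤ n → u ∉ I ^ m → True := fun _ _ _ => trivial
  refine ⟨u, v, ?_, ?_, ?_⟩
  · -- u * v ∈ I ^ c
    have h0 : Ideal.Quotient.mk (I ^ k • ⊤ : Ideal R) (u * v) = 0 := by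
      rw [map_mul, hu, hv]
      have : (x * y).val k = x.val k * y.val k := AdicCompletion.val_mul I k x y
      rw [← this, hxy, AdicCompletion.val_zero, Pi.zero_apply]
    have huv : u * v ∈ (I ^ k • ⊤ : Ideal R) := Ideal.Quotient.eq_zero_iff_mem.mp h0
    rw [smul_eq_mul, Ideal.mul_top] at huv
    exact Ideal.pow_le_pow_right (le_max_right n c) huv
  · -- u ∉ I ^ n
    intro hmem
    have h1 : Ideal.Quotient.mk (I ^ n • ⊤ : Ideal R) u = 0 := by
      rw [Ideal.Quotient.eq_zero_iff_mem, smul_eq_mul, Ideal.mul_top]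
      exact hmem
    have h2 : x.val n = 0 := by rw [← hcompat x u n hnk hu, h1]
    have h3 : x.val a = 0 := by
      have := x.property (le_max_left a b : a ≤ n)
      rw [← this, h2, map_zero]
    exact ha h3
  · -- v ∉ I ^ n
    intro hmem
    have h1 : Ideal.Quotient.mk (I ^ n • ⊤ : Ideal R) v = 0 := by
      rw [Ideal.Quotient.eq_zero_iff_mem, smul_eq_mul, Ideal.mul_top]
      exact hmem
    have h2 : y.val n = 0 := by rw [← hcompat y v n hnk hv, h1]
    have h3 : y.val b = 0 := by
      have := y.property (le_max_right a b : b ≤ n)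
      rw [← this, h2, map_zero]
    exact hb h3
end

section
/- Let (R,(t)) be a discrete valuation ring with uniformizer t, let k ≤ l be positive integers and 1 ≤ r ≤ k. Then for every n ≥ 1 and every k×l matrix A with entries in R all of whose r×r minors lie in the ideal (t)^{rn−r+1}, there exists a k×l matrix B with entries in R all of whose r×r minors are zero and with A ≡ B (mod (t)^n) entrywise. -/
open IsLocalRing

section Helpers

variable {R : Type*} [CommRing R]

/-- If `d` divides every determinant of a submatrix with strictly monotone row/column
selections of size `q`, then it divides the determinant of every `q × q` submatrix. -/
lemma dvd_det_submatrix_of_strictMono {k l q : ℕ} (A : Matrix (Fin k) (Fin l) R) (d : R)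
    (h : ∀ (ρ : Fin q → Fin k) (σ : Fin q → Fin l), StrictMono ρ → StrictMono σ →
      d ∣ (A.submatrix ρ σ).det)
    (ρ : Fin q → Fin k) (σ : Fin q → Fin l) : d ∣ (A.submatrix ρ σ).det := by
  by_cases hρ : Function.Injective ρ
  · by_cases hσ : Function.Injective σ
    · classical
      set π := Tuple.sort ρ
      set τ := Tuple.sort σ
      have hρ0 : StrictMono (ρ ∘ π) :=
        (Tuple.monotone_sort ρ).strictMono_of_injective (hρ.comp π.injective)
      have hσ0 : StrictMono (σ ∘ τ) :=
        (Tuple.monotone_sort σ).strictMono_of_injective (hσ.comp τ.injective)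
      have hA0 : A.submatrix ρ σ = (A.submatrix (ρ ∘ π) (σ ∘ τ)).submatrix ⇑π⁻¹ ⇑τ⁻¹ := by
        ext i j
        simp [Matrix.submatrix_apply]
      have hA1 : (A.submatrix ρ σ).det =
          (Equiv.Perm.sign π⁻¹ : ℤ) * ((Equiv.Perm.sign τ⁻¹ : ℤ) *
            (A.submatrix (ρ ∘ π) (σ ∘ τ)).det) := by
        rw [hA0]
        have : ((A.submatrix (ρ ∘ π) (σ ∘ τ)).submatrix ⇑π⁻¹ ⇑τ⁻¹) =
            (((A.submatrix (ρ ∘ π) (σ ∘ τ)).submatrix id ⇑τ⁻¹).submatrix ⇑π⁻¹ id) := by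
          ext i j; simp
        rw [this, Matrix.det_permute, Matrix.det_permute']
      rw [hA1]
      exact ((h _ _ hρ0 hσ0).mul_left _).mul_left _
    · obtain ⟨a, b, hab, hne⟩ := Function.not_injective_iff.mp hσ
      have : (A.submatrix ρ σ).det = 0 :=
        Matrix.det_zero_of_column_eq hne (fun i => by simp [Matrix.submatrix_apply, hab])
      rw [this]; exact dvd_zero d
  · obtain ⟨a, b, hab, hne⟩ := Function.not_injective_iff.mp hρ
    have : (A.submatrix ρ σ).det = 0 :=
      Matrix.det_zero_of_row_eq hne (by funext j; simp [Matrix.submatrix_apply, hab])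
    rw [this]; exact dvd_zero d

/-- In a ring with total divisibility, every nonempty finite set has an element dividing
all others. -/
lemma Finset.exists_dvd_all (htot : ∀ a b : R, a ∣ b ∨ b ∣ a) (F : Finset R)
    (hF : F.Nonempty) : ∃ m ∈ F, ∀ x ∈ F, m ∣ x := by
  classical
  induction F using Finset.induction_on with
  | empty => exact absurd hF (by simp)
  | @insert a F ha ih =>
    rcases F.eq_empty_or_nonempty with rfl | hF'
    · exact ⟨a, by simp⟩
    · obtain ⟨m, hmF, hm⟩ := ih hF'
      rcases htot a m with h | h
      · exact ⟨a, Finset.mem_insert_self _ _, fun x hx => by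
          rcases Finset.mem_insert.mp hx with rfl | hx
          · exact dvd_rfl
          · exact h.trans (hm x hx)⟩
      · exact ⟨m, Finset.mem_insert_of_mem hmF, fun x hx => by
          rcases Finset.mem_insert.mp hx with rfl | hx
          · exact h
          · exact hm x hx⟩

end Helpers

/-- **Theorem (determinantal ideals over a DVR, upper bound).** Let `(R, (t))` be a discrete
valuation ring with uniformizer `t`, let `k ≤ l` and `1 ≤ r ≤ k`.  For every `n ≥ 1` and every
`k × l` matrix `A` over `R` all of whose `r × r` minors lie in `(t)^(rn − r + 1)`, there is a
`k × l` matrix `B` over `R` all of whose `r × r` minors vanish with `A ≡ B (mod (t)ⁿ)`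
entrywise. -/
theorem determinantal_artin_upper_bound
    (R : Type*) [CommRing R] [IsDomain R] [IsDiscreteValuationRing R]
    (t : R) (ht0 : t ≠ 0) (ht : maximalIdeal R = Ideal.span {t})
    (k l r : ℕ) (hk : 0 < k) (hkl : k ≤ l) (hr : 1 ≤ r) (hrk : r ≤ k)
    (n : ℕ) (hn : 1 ≤ n) (A : Matrix (Fin k) (Fin l) R)
    (hA : ∀ (rows : Fin r → Fin k) (cols : Fin r → Fin l), StrictMono rows → StrictMono cols →
      (A.submatrix rows cols).det ∈ Ideal.span {t} ^ (r * n - r + 1)) :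
    ∃ B : Matrix (Fin k) (Fin l) R,
      (∀ (rows : Fin r → Fin k) (cols : Fin r → Fin l), StrictMono rows → StrictMono cols →
        (B.submatrix rows cols).det = 0) ∧
      ∀ i j, A i j - B i j ∈ Ideal.span {t} ^ n := by
  classical
  have htot : ∀ a b : R, a ∣ b ∨ b ∣ a := fun a b => ValuationRing.dvd_total a b
  -- `t` is not a unit
  have htu : ¬ IsUnit t := by
    intro h
    exact (Ideal.IsMaximal.ne_top (IsLocalRing.maximalIdeal.isMaximal R))
      (by rw [ht, Ideal.span_singleton_eq_top.mpr h])
  -- the half-open divisibility step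
  have hstep : ∀ c x : R, ¬ (c * t ^ n ∣ x) → x ∣ c * t ^ (n - 1) := by
    intro c x hcx
    rcases htot (c * t ^ (n - 1)) x with h1 | h1
    · obtain ⟨y, rfl⟩ := h1
      have hy : ¬ t ∣ y := by
        rintro ⟨z, rfl⟩
        apply hcx
        refine ⟨z, ?_⟩
        have hnn : n - 1 + 1 = n := Nat.succ_pred_eq_of_pos hn
        calc c * t ^ (n - 1) * (t * z) = c * (t ^ (n - 1) * t) * z := by ring
        _ = c * t ^ n * z := by rw [← pow_succ, hnn]
      have hyu : IsUnit y := by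
        by_contra hu
        exact hy (Ideal.mem_span_singleton.mp (ht ▸ (IsLocalRing.mem_maximalIdeal y).mpr hu))
      obtain ⟨u, rfl⟩ := hyu
      exact ⟨(↑u⁻¹ : R), by rw [mul_assoc, Units.mul_inv, mul_one]⟩
    · exact h1
  -- the finite sets of minors of each size
  let minors : ℕ → Finset R := fun q =>
    Finset.image (fun p : (Fin q → Fin k) × (Fin q → Fin l) => (A.submatrix p.1 p.2).det)
      (Finset.univ.filter fun p => StrictMono p.1 ∧ StrictMono p.2)
  have hminors_ne : ∀ q, q ≤ k → (minors q).Nonempty := by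
    intro q hq
    refine ⟨(A.submatrix (Fin.castLE hq) (Fin.castLE (hq.trans hkl))).det, ?_⟩
    exact Finset.mem_image.mpr ⟨⟨Fin.castLE hq, Fin.castLE (hq.trans hkl)⟩,
      Finset.mem_filter.mpr ⟨Finset.mem_univ _,
        Fin.strictMono_castLE hq, Fin.strictMono_castLE (hq.trans hkl)⟩, rfl⟩
  -- the key predicate
  let P : ℕ → Prop := fun s => s < r ∧ ∃ m ∈ minors s,
    (∀ x ∈ minors s, m ∣ x) ∧ ∀ x ∈ minors (s + 1), m * t ^ n ∣ x
  -- existence of some `s` satisfying `P`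
  have hex : ∃ s, P s := by
    by_contra hno
    push_neg at hno
    have key : ∀ q, q ≤ r → ∃ m ∈ minors q, (∀ x ∈ minors q, m ∣ x) ∧ m ∣ t ^ (q * (n - 1)) := by
      intro q
      induction q with
      | zero =>
        intro _
        obtain ⟨m, hmF, hm⟩ := Finset.exists_dvd_all htot _ (hminors_ne 0 (Nat.zero_le _))
        have hone : m = 1 := by
          obtain ⟨p, _, rfl⟩ := Finset.mem_image.mp hmF
          exact Matrix.det_isEmpty
        exact ⟨m, hmF, hm, by simp [hone]⟩
      | succ q ih =>
        intro hq
        obtain ⟨m, hmF, hmdvd, hmt⟩ := ih (Nat.le_of_succ_le hq)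
        obtain ⟨m', hm'F, hm'dvd⟩ :=
          Finset.exists_dvd_all htot _ (hminors_ne (q + 1) (hq.trans hrk))
        have hnd : ¬ (m * t ^ n ∣ m') := by
          intro hdd
          exact hno q ⟨hq, m, hmF, hmdvd, fun x hx => hdd.trans (hm'dvd x hx)⟩
        have h1 : m' ∣ m * t ^ (n - 1) := hstep m m' hnd
        refine ⟨m', hm'F, hm'dvd, h1.trans ?_⟩
        have : (q + 1) * (n - 1) = q * (n - 1) + (n - 1) := by ring
        rw [this, pow_add]
        exact mul_dvd_mul hmt dvd_rfl
    obtain ⟨m, hmF, hmdvd, hmt⟩ := key r le_rfl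
    -- `t ^ (r * (n-1) + 1)` divides `m`
    have hdvdm : t ^ (r * (n - 1) + 1) ∣ m := by
      obtain ⟨⟨ρ, σ⟩, hp, rfl⟩ := Finset.mem_image.mp hmF
      obtain ⟨-, h1, h2⟩ := Finset.mem_filter.mp hp
      have := hA ρ σ h1 h2
      rw [Ideal.span_singleton_pow, Ideal.mem_span_singleton] at this
      have he : r * n - r + 1 = r * (n - 1) + 1 := by
        have : r * (n - 1) = r * n - r := by
          rw [Nat.mul_sub, mul_one]
        omega
      rwa [he] at this
    have : t ^ (r * (n - 1)) * t ∣ t ^ (r * (n - 1)) * 1 := by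
      rw [mul_one, ← pow_succ]
      exact hdvdm.trans hmt
    have : t ∣ 1 := (mul_dvd_mul_iff_left (pow_ne_zero _ ht0)).mp this
    exact htu (isUnit_of_dvd_one this)
  -- take the least such `s`
  let s := Nat.find hex
  obtain ⟨hsr, m, hmF, hmdvd, hmt⟩ : P s := Nat.find_spec hex
  -- `m` is nonzero
  have hm0 : m ≠ 0 := by
    intro hm0
    have hz : ∀ x ∈ minors s, x = 0 := fun x hx => zero_dvd_iff.mp (hm0 ▸ hmdvd x hx)
    rcases Nat.eq_zero_or_pos s with hs | hs
    · rw [hs] at hmF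
      obtain ⟨p, -, hpm⟩ := Finset.mem_image.mp hmF
      rw [hm0] at hpm
      exact one_ne_zero (Matrix.det_isEmpty (A := A.submatrix p.1 p.2) ▸ hpm)
    · have hjlt : s - 1 < s := by omega
      obtain ⟨mj, hmjF, hmj⟩ :=
        Finset.exists_dvd_all htot (minors (s - 1)) (hminors_ne (s - 1) (by omega))
      refine Nat.find_min hex hjlt ⟨by omega, mj, hmjF, hmj, fun x hx => ?_⟩
      rw [hz x (by rwa [show s - 1 + 1 = s by omega] at hx)]
      exact dvd_zero _
  -- the chosen minimal minor
  obtain ⟨⟨ρ, σ⟩, hp, hdetm⟩ := Finset.mem_image.mp hmF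
  obtain ⟨-, hρ, hσ⟩ := Finset.mem_filter.mp hp
  -- `m * t ^ n` divides every `(s+1) × (s+1)` submatrix determinant
  have hall : ∀ (ρ' : Fin (s + 1) → Fin k) (σ' : Fin (s + 1) → Fin l),
      m * t ^ n ∣ (A.submatrix ρ' σ').det := by
    refine fun ρ' σ' => dvd_det_submatrix_of_strictMono A _ (fun a b h1 h2 => ?_) ρ' σ'
    exact hmt _ (Finset.mem_image.mpr
      ⟨⟨a, b⟩, Finset.mem_filter.mpr ⟨Finset.mem_univ _, h1, h2⟩, rfl⟩)
  have hcex : ∀ i j, ∃ cc, (A.submatrix (Fin.snoc ρ i) (Fin.snoc σ j)).det = m * t ^ n * cc :=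
    fun i j => hall _ _
  choose c hc using hcex
  set B : Matrix (Fin k) (Fin l) R := Matrix.of fun i j => A i j - t ^ n * c i j with hB
  refine ⟨B, ?_, ?_⟩
  swap
  · intro i j
    rw [Ideal.span_singleton_pow, Ideal.mem_span_singleton]
    refine ⟨c i j, ?_⟩
    show A i j - (A i j - t ^ n * c i j) = t ^ n * c i j
    ring
  -- all r × r minors of B vanish
  set K := FractionRing R with hK
  set φ : R →+* K := algebraMap R K with hφdef
  have hφ : Function.Injective φ := IsFractionRing.injective R K
  set M : Matrix (Fin s) (Fin s) K := (A.submatrix ρ σ).map φ with hM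
  have hdetM : M.det = φ m := by
    rw [hM, ← RingHom.mapMatrix_apply, ← RingHom.map_det, hdetm]
  have hMunit : IsUnit M.det := by
    rw [hdetM]
    exact isUnit_iff_ne_zero.mpr fun h => hm0 (hφ (by rw [h, map_zero]))
  have : Invertible M := M.invertibleOfIsUnitDet hMunit
  have hφm : φ m ≠ 0 := fun h => hm0 (hφ (by rw [h, map_zero]))
  set P1 : Matrix (Fin k) (Fin s) K := ((A.submatrix id σ).map φ) * ⅟M with hP1
  set Q1 : Matrix (Fin s) (Fin l) K := (A.submatrix ρ id).map φ with hQ1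
  have hBφ : B.map φ = P1 * Q1 := by
    ext i j
    set rB : Matrix (Fin 1) (Fin s) K := Matrix.of fun _ b => φ (A i (σ b)) with hrB
    set cB : Matrix (Fin s) (Fin 1) K := Matrix.of fun a _ => φ (A (ρ a) j) with hcB
    set dB : Matrix (Fin 1) (Fin 1) K := Matrix.of fun _ _ => φ (A i j) with hdB
    have hF : Matrix.fromBlocks M cB rB dB =
        ((A.submatrix (Fin.snoc ρ i) (Fin.snoc σ j)).map φ).submatrix
          finSumFinEquiv finSumFinEquiv := by
      ext a b
      have hlast : Fin.natAdd s (0 : Fin 1) = Fin.last s := by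
        ext; simp
      have hcs : ∀ (q : ℕ) (a : Fin q), Fin.castAdd 1 a = Fin.castSucc a := fun _ _ => rfl
      cases a with
      | inl a =>
        cases b with
        | inl b =>
          simp [hM, finSumFinEquiv_apply_left, hcs, Fin.snoc_castSucc]
        | inr b =>
          rw [Subsingleton.elim b 0]
          simp [hcB, finSumFinEquiv_apply_left, finSumFinEquiv_apply_right, hlast,
            hcs, Fin.snoc_castSucc, Fin.snoc_last]
      | inr a =>
        rw [Subsingleton.elim a 0]
        cases b with
        | inl b =>
          simp [hrB, finSumFinEquiv_apply_left, finSumFinEquiv_apply_right, hlast,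
            hcs, Fin.snoc_castSucc, Fin.snoc_last]
        | inr b =>
          rw [Subsingleton.elim b 0]
          simp [hdB, finSumFinEquiv_apply_right, hlast, Fin.snoc_last]
    have hSchur : φ ((A.submatrix (Fin.snoc ρ i) (Fin.snoc σ j)).det)
        = φ m * (φ (A i j) - (P1 * Q1) i j) := by
      rw [RingHom.map_det, RingHom.mapMatrix_apply]
      rw [show ((A.submatrix (Fin.snoc ρ i) (Fin.snoc σ j)).map φ).det
          = (Matrix.fromBlocks M cB rB dB).det by rw [hF, Matrix.det_submatrix_equiv_self]]
      rw [Matrix.det_fromBlocks₁₁, hdetM]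
      congr 1
      rw [Matrix.det_fin_one]
      have hPQ : (P1 * Q1) i j = (rB * ⅟M * cB) 0 0 := by
        simp [hP1, hQ1, hrB, hcB, Matrix.mul_apply]
      rw [hPQ]
      simp [hdB]
    have h2 : φ m * (φ t ^ n * φ (c i j)) = φ m * (φ (A i j) - (P1 * Q1) i j) := by
      rw [← hSchur, hc i j, map_mul, map_mul, map_pow, mul_assoc]
    have h3 : φ t ^ n * φ (c i j) = φ (A i j) - (P1 * Q1) i j := mul_left_cancel₀ hφm h2
    show φ (A i j - t ^ n * c i j) = (P1 * Q1) i j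
    rw [map_sub, map_mul, map_pow, h3]
    ring
  intro rows cols _ _
  apply hφ
  rw [map_zero, RingHom.map_det, RingHom.mapMatrix_apply]
  have hsub : (B.submatrix rows cols).map φ = (P1.submatrix rows id) * (Q1.submatrix id cols) := by
    ext i j
    have hij : (B.map φ) (rows i) (cols j) = (P1 * Q1) (rows i) (cols j) := by rw [hBφ]
    simpa [Matrix.mul_apply] using hij
  rw [hsub]
  by_contra hne
  have hu : IsUnit ((P1.submatrix rows id) * (Q1.submatrix id cols)) :=
    (Matrix.isUnit_iff_isUnit_det _).mpr (isUnit_iff_ne_zero.mpr hne)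
  have h1 : ((P1.submatrix rows id) * (Q1.submatrix id cols)).rank = r := by
    rw [Matrix.rank_of_isUnit _ hu, Fintype.card_fin]
  have h2 : ((P1.submatrix rows id) * (Q1.submatrix id cols)).rank ≤ s := by
    refine le_trans (Matrix.rank_mul_le_left _ _) ?_
    exact le_trans (Matrix.rank_le_card_width _) (by simp)
  omega
end

section
/- Let (R,(t)) be a discrete valuation ring with uniformizer t, let k ≤ l be positive integers and 1 ≤ r ≤ k. Then for every n ≥ 1 there exists a k×l matrix A with entries in R all of whose r×r minors lie in the ideal (t)^{rn−r}, such that every k×l matrix B over R with A ≡ B (mod (t)^n) entrywise has some nonzero r×r minor. Consequently the Artin function of the ideal I_r of r×r minors of a k×l matrix of indeterminates satisfies β_n(I_r) > rn − r, and combined with the matching upper bound, β_n(I_r) = rn − r + 1. -/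
open IsLocalRing

section Helpers

open Matrix

variable {R : Type*} [CommRing R]

lemma minor_mul_left {k k' l r : ℕ}
    (U : Matrix (Fin k') (Fin k) R) (A : Matrix (Fin k) (Fin l) R) (J : Ideal R)
    (hA : ∀ (p : Fin r → Fin k) (q : Fin r → Fin l), (A.submatrix p q).det ∈ J)
    (p : Fin r → Fin k') (q : Fin r → Fin l) : ((U * A).submatrix p q).det ∈ J := by
  have hrow : (U * A).submatrix p q
      = Matrix.of (fun i => ∑ a : Fin k, U (p i) a • (fun j : Fin r => A a (q j))) := by
    ext i j
    simp [Matrix.mul_apply, Finset.sum_apply]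
  rw [hrow]
  have hdet : Matrix.det (Matrix.of fun i => ∑ a : Fin k, U (p i) a • (fun j : Fin r => A a (q j)))
      = ∑ h : Fin r → Fin k, (Matrix.detRowAlternating :
          ((Fin r → R) [⋀^Fin r]→ₗ[R] R)).toMultilinearMap
          (fun i => U (p i) (h i) • (fun j : Fin r => A (h i) (q j))) := by
    exact MultilinearMap.map_sum
      (f := (Matrix.detRowAlternating : ((Fin r → R) [⋀^Fin r]→ₗ[R] R)).toMultilinearMap)
      (α := fun _ : Fin r => Fin k)
      (g := fun i a => U (p i) a • (fun j : Fin r => A a (q j)))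
  rw [hdet]
  refine Ideal.sum_mem _ fun h _ => ?_
  rw [MultilinearMap.map_smul_univ]
  exact Ideal.mul_mem_left _ _ (hA h q)

lemma minor_transpose {k l r : ℕ} (A : Matrix (Fin k) (Fin l) R)
    (p : Fin r → Fin k) (q : Fin r → Fin l) :
    (Aᵀ.submatrix q p).det = (A.submatrix p q).det := by
  rw [← Matrix.transpose_submatrix, Matrix.det_transpose]

lemma minor_mul_right {k l l' r : ℕ}
    (A : Matrix (Fin k) (Fin l) R) (V : Matrix (Fin l) (Fin l') R) (J : Ideal R)
    (hA : ∀ (p : Fin r → Fin k) (q : Fin r → Fin l), (A.submatrix p q).det ∈ J)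
    (p : Fin r → Fin k) (q : Fin r → Fin l') : ((A * V).submatrix p q).det ∈ J := by
  have h1 : ((A * V).submatrix p q).det = ((Vᵀ * Aᵀ).submatrix q p).det := by
    rw [← Matrix.transpose_mul, minor_transpose]
  rw [h1]
  exact minor_mul_left Vᵀ Aᵀ J (fun q' p' => by rw [minor_transpose]; exact hA p' q') q p

lemma dvd_mul_mul_entry {k l : ℕ} (x : R) (X : Matrix (Fin k) (Fin k) R)
    (M : Matrix (Fin k) (Fin l) R) (Y : Matrix (Fin l) (Fin l) R)
    (hM : ∀ a b, x ∣ M a b) (i : Fin k) (j : Fin l) : x ∣ (X * M * Y) i j := by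
  rw [Matrix.mul_apply]
  refine Finset.dvd_sum fun b _ => ?_
  rw [Matrix.mul_apply]
  exact Dvd.dvd.mul_right (Finset.dvd_sum fun a _ => (Dvd.dvd.mul_left (hM a b) _)) _

lemma pow_card_dvd_prod {ι : Type*} (s : Finset ι) (x : R) (f : ι → R)
    (h : ∀ i ∈ s, x ∣ f i) : x ^ s.card ∣ ∏ i ∈ s, f i := by
  calc x ^ s.card = ∏ _i ∈ s, x := (Finset.prod_const x).symm
  _ ∣ ∏ i ∈ s, f i := Finset.prod_dvd_prod_of_dvd _ _ h

lemma zsmul_dvd {x y : R} (u : ℤˣ) (h : x ∣ y) : x ∣ u • y := by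
  obtain h1 | h1 := Int.units_eq_one_or u <;> subst h1 <;>
    simpa [Units.smul_def, dvd_neg] using h

lemma pow_dvd_det {r a : ℕ} (x : R) (M : Matrix (Fin r) (Fin r) R)
    (h : ∀ i j, x ^ a ∣ M i j) : x ^ (a * r) ∣ M.det := by
  rw [Matrix.det_apply]
  refine Finset.dvd_sum fun σ _ => ?_
  refine zsmul_dvd _ ?_
  have := pow_card_dvd_prod Finset.univ (x ^ a) (fun i => M (σ i) i) (fun i _ => h _ _)
  simpa [← pow_mul, Finset.card_univ] using this

lemma prod_sub_dvd {ι : Type*} [DecidableEq ι] (t : R) (m : ℕ) (s : Finset ι) (ε : ι → R)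
    (h : ∀ i ∈ s, t ^ (m + 1) ∣ ε i) :
    t ^ (m * s.card + 1) ∣ (∏ i ∈ s, (t ^ m - ε i)) - t ^ (m * s.card) := by
  induction s using Finset.induction_on with
  | empty => simp
  | @insert a s ha ih =>
    have hdvd_a : t ^ (m + 1) ∣ ε a := h a (Finset.mem_insert_self a s)
    have ih' := ih (fun i hi => h i (Finset.mem_insert_of_mem hi))
    rw [Finset.prod_insert ha, Finset.card_insert_of_notMem ha]
    set P := ∏ i ∈ s, (t ^ m - ε i) with hP
    have key : (t ^ m - ε a) * P - t ^ (m * (s.card + 1))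
        = t ^ m * (P - t ^ (m * s.card)) - ε a * P := by ring
    rw [key]
    refine dvd_sub ?_ ?_
    · have he : t ^ (m * (s.card + 1) + 1) = t ^ m * t ^ (m * s.card + 1) := by ring
      rw [he]
      exact mul_dvd_mul_left _ ih'
    · have he : t ^ (m * (s.card + 1) + 1) = t ^ (m + 1) * t ^ (m * s.card) := by ring
      rw [he]
      refine mul_dvd_mul hdvd_a ?_
      have : ∀ i ∈ s, t ^ m ∣ (t ^ m - ε i) := fun i hi =>
        dvd_sub (dvd_refl _) ((pow_dvd_pow t (Nat.le_succ m)).trans (h i (Finset.mem_insert_of_mem hi)))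
      have := pow_card_dvd_prod s (t ^ m) _ this
      simpa [← pow_mul] using this

lemma exists_perm_strictMono {r k : ℕ} {p : Fin r → Fin k} (hp : Function.Injective p) :
    ∃ σ : Equiv.Perm (Fin r), StrictMono (p ∘ σ) := by
  classical
  have hcard : (Finset.univ.image p).card = r := by
    rw [Finset.card_image_of_injective _ hp, Finset.card_univ, Fintype.card_fin]
  set s := Finset.univ.image p with hs
  have hmem : ∀ i, p i ∈ s := fun i => Finset.mem_image_of_mem _ (Finset.mem_univ i)
  let g : Fin r → {x // x ∈ s} := fun i => ⟨p i, hmem i⟩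
  have hg : Function.Bijective g := by
    rw [Fintype.bijective_iff_injective_and_card]
    refine ⟨fun a b hab => hp (congrArg Subtype.val hab), ?_⟩
    simp [Fintype.card_coe, hcard]
  let G := Equiv.ofBijective g hg
  refine ⟨(s.orderIsoOfFin hcard).toEquiv.trans G.symm, ?_⟩
  have hval : ∀ a, p (((s.orderIsoOfFin hcard).toEquiv.trans G.symm) a)
      = ((s.orderIsoOfFin hcard) a : Fin k) := by
    intro a
    have h2 := G.apply_symm_apply ((s.orderIsoOfFin hcard).toEquiv a)
    have : g (G.symm ((s.orderIsoOfFin hcard).toEquiv a))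
        = (s.orderIsoOfFin hcard).toEquiv a := h2
    have := congrArg Subtype.val this
    simpa using this
  intro a b hab
  rw [Function.comp_apply, Function.comp_apply, hval, hval]
  exact Subtype.coe_lt_coe.mpr ((s.orderIsoOfFin hcard).strictMono hab)

lemma neg_one_pow_mul_mem {J : Ideal R} {x : R} (u : ℤˣ) (h : ((u : ℤ) : R) * x ∈ J) : x ∈ J := by
  obtain h1 | h1 := Int.units_eq_one_or u <;> subst h1 <;>
    simpa [J.neg_mem_iff] using h

lemma generalized_of_strictMono {k l r : ℕ} (A : Matrix (Fin k) (Fin l) R) (J : Ideal R)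
    (h : ∀ (rows : Fin r → Fin k) (cols : Fin r → Fin l), StrictMono rows → StrictMono cols →
      (A.submatrix rows cols).det ∈ J)
    (p : Fin r → Fin k) (q : Fin r → Fin l) : (A.submatrix p q).det ∈ J := by
  classical
  by_cases hp : Function.Injective p
  · by_cases hq : Function.Injective q
    · obtain ⟨σ, hσ⟩ := exists_perm_strictMono hp
      obtain ⟨τ, hτ⟩ := exists_perm_strictMono hq
      have hJ := h (p ∘ σ) (q ∘ τ) hσ hτ
      have e1 : A.submatrix (p ∘ σ) (q ∘ τ)
          = ((A.submatrix p q).submatrix σ id).submatrix id τ := by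
        simp [Matrix.submatrix_submatrix]
      rw [e1, Matrix.det_permute', Matrix.det_permute] at hJ
      have hJ' : ((Equiv.Perm.sign τ : ℤ) : R) * (((Equiv.Perm.sign σ : ℤ) : R)
          * (A.submatrix p q).det) ∈ J := by
        convert hJ using 1
        try ring
      exact neg_one_pow_mul_mem _ (neg_one_pow_mul_mem _ hJ')
    · obtain ⟨a, b, hab, hne⟩ := Function.not_injective_iff.mp hq
      have : (A.submatrix p q).det = 0 :=
        Matrix.det_zero_of_column_eq hne (fun i => by simp [Matrix.submatrix_apply, hab])
      rw [this]; exact J.zero_mem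
  · obtain ⟨a, b, hab, hne⟩ := Function.not_injective_iff.mp hp
    have : (A.submatrix p q).det = 0 :=
      Matrix.det_zero_of_row_eq hne (funext fun j => by simp [Matrix.submatrix_apply, hab])
    rw [this]; exact J.zero_mem

lemma det_expand_first {r : ℕ} (M : Matrix (Fin (r + 1)) (Fin (r + 1)) R)
    (h : ∀ i, i ≠ 0 → M i 0 = 0) :
    M.det = M 0 0 * (M.submatrix Fin.succ Fin.succ).det := by
  rw [Matrix.det_succ_column_zero, Finset.sum_eq_single 0]
  · simp
  · intro i _ hi; rw [h i hi]; ring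
  · intro h0; exact absurd (Finset.mem_univ _) h0

end Helpers

section DVR

variable {R : Type*} [CommRing R] [IsDomain R] [IsDiscreteValuationRing R]

lemma pivot_cancel {t piv x : R} (hirr : Irreducible t) {m e c : ℕ}
    (hpiv : ¬ t ^ (m + 1) ∣ piv) (h : t ^ c ∣ piv * x) (hc : m + e ≤ c) : t ^ e ∣ x := by
  have hpiv0 : piv ≠ 0 := by rintro rfl; exact hpiv (dvd_zero _)
  obtain ⟨v, u, rfl⟩ := IsDiscreteValuationRing.eq_unit_mul_pow_irreducible hpiv0 hirr
  have hv : v ≤ m := by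
    by_contra hv
    exact hpiv (Dvd.dvd.mul_left (pow_dvd_pow t (by omega)) _)
  obtain ⟨y, hy⟩ := h
  have hcv : c = v + (c - v) := by omega
  have ht0 : (t : R) ^ v ≠ 0 := pow_ne_zero _ hirr.ne_zero
  have hpp : t ^ v * t ^ (c - v) = t ^ c := by
    rw [← pow_add]; congr 1; omega
  have hx : t ^ v * ((u : R) * x) = t ^ v * (t ^ (c - v) * y) := by
    calc t ^ v * ((u : R) * x) = (u : R) * t ^ v * x := by ring
    _ = t ^ c * y := hy
    _ = t ^ v * (t ^ (c - v) * y) := by rw [← hpp, mul_assoc]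
  have hux : (u : R) * x = t ^ (c - v) * y := mul_left_cancel₀ ht0 hx
  have : x = t ^ (c - v) * (((u⁻¹ : Rˣ) : R) * y) := by
    have : ((u⁻¹ : Rˣ) : R) * ((u : R) * x) = x := by
      rw [← mul_assoc]; simp
    rw [← this, hux]; ring
  rw [this]
  exact Dvd.dvd.mul_right (pow_dvd_pow t (by omega)) _

lemma main_approx {t : R} (hirr : Irreducible t) (m : ℕ) :
    ∀ r k l : ℕ, ∀ A : Matrix (Fin k) (Fin l) R,
      (∀ (p : Fin (r + 1) → Fin k) (q : Fin (r + 1) → Fin l),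
        t ^ ((r + 1) * m + 1) ∣ (A.submatrix p q).det) →
      ∃ B : Matrix (Fin k) (Fin l) R,
        (∀ (p : Fin (r + 1) → Fin k) (q : Fin (r + 1) → Fin l), (B.submatrix p q).det = 0) ∧
        ∀ i j, t ^ (m + 1) ∣ (A i j - B i j) := by
  intro r
  induction r with
  | zero =>
    intro k l A hA
    refine ⟨0, fun p q => by simp [Matrix.det_fin_one], fun i j => ?_⟩
    have := hA (fun _ => i) (fun _ => j)
    simpa [Matrix.det_fin_one] using this
  | succ r ih =>
    intro k l A hA
    classical
    by_cases hall : ∀ i j, t ^ (m + 1) ∣ A i j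
    · refine ⟨0, fun p q => ?_, fun i j => by simpa using hall i j⟩
      have h0 : (0 : Matrix (Fin k) (Fin l) R).submatrix p q = 0 := rfl
      rw [h0]
      exact Matrix.det_zero
    · push_neg at hall
      obtain ⟨i1, j1, hij1⟩ := hall
      haveI : NeZero k := ⟨by rintro rfl; exact i1.elim0⟩
      haveI : NeZero l := ⟨by rintro rfl; exact j1.elim0⟩
      obtain ⟨⟨i0, j0⟩, -, hmin⟩ := Finset.exists_min_image (Finset.univ : Finset (Fin k × Fin l))
        (fun x => IsDiscreteValuationRing.addVal R (A x.1 x.2)) ⟨(i1, j1), Finset.mem_univ _⟩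
      have hdvd_all : ∀ i j, A i0 j0 ∣ A i j := fun i j =>
        IsDiscreteValuationRing.addVal_le_iff_dvd.mp (hmin (i, j) (Finset.mem_univ _))
      set e : Equiv.Perm (Fin k) := Equiv.swap 0 i0 with he
      set f : Equiv.Perm (Fin l) := Equiv.swap 0 j0 with hf
      set A₁ := A.submatrix e f with hA₁
      have hA₁entry : ∀ i j, A₁ 0 0 ∣ A₁ i j := by
        intro i j
        simpa [hA₁, Matrix.submatrix_apply, he, hf, Equiv.swap_apply_left] using
          hdvd_all (e i) (f j)
      set piv := A₁ 0 0 with hpiv_def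
      have hpivA : piv = A i0 j0 := by
        simp [hpiv_def, hA₁, Matrix.submatrix_apply, he, hf, Equiv.swap_apply_left]
      have hpivn : ¬ t ^ (m + 1) ∣ piv := fun hcon => hij1 (hcon.trans (hpivA ▸ hdvd_all i1 j1))
      choose c hc using fun i => hA₁entry i 0
      choose d hd using fun j => hA₁entry 0 j
      set N : Matrix (Fin k) (Fin k) R :=
        Matrix.of (fun i a => if a = 0 then (if i = 0 then 0 else c i) else 0) with hN
      set N' : Matrix (Fin l) (Fin l) R :=
        Matrix.of (fun b j => if b = 0 then (if j = 0 then 0 else d j) else 0) with hN'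
      have hNA : ∀ (M : Matrix (Fin k) (Fin l) R) i j,
          (N * M) i j = (if i = 0 then 0 else c i) * M 0 j := by
        intro M i j
        rw [Matrix.mul_apply, Finset.sum_eq_single 0]
        · simp [hN]
        · intro b _ hb; simp [hN, hb]
        · intro h0; exact absurd (Finset.mem_univ _) h0
      have hAN' : ∀ (M : Matrix (Fin k) (Fin l) R) i j,
          (M * N') i j = M i 0 * (if j = 0 then 0 else d j) := by
        intro M i j
        rw [Matrix.mul_apply, Finset.sum_eq_single 0]
        · simp [hN']
        · intro b _ hb; simp [hN', hb]
        · intro h0; exact absurd (Finset.mem_univ _) h0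
      set L := (1 : Matrix (Fin k) (Fin k) R) - N with hL
      set L' := (1 : Matrix (Fin k) (Fin k) R) + N with hL'
      set Rm := (1 : Matrix (Fin l) (Fin l) R) - N' with hRm
      set Rm' := (1 : Matrix (Fin l) (Fin l) R) + N' with hRm'
      have hNN : N * N = 0 := by
        ext i j
        rw [Matrix.mul_apply, Finset.sum_eq_single 0]
        · simp [hN]
        · intro b _ hb; simp [hN, hb]
        · intro h0; exact absurd (Finset.mem_univ _) h0
      have hN'N' : N' * N' = 0 := by
        ext i j
        rw [Matrix.mul_apply, Finset.sum_eq_single 0]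
        · simp [hN']
        · intro b _ hb; simp [hN', hb]
        · intro h0; exact absurd (Finset.mem_univ _) h0
      have hLL' : L' * L = 1 := by
        rw [hL, hL', add_mul, mul_sub, mul_sub, one_mul, one_mul, mul_one, hNN]
        abel
      have hRR' : Rm * Rm' = 1 := by
        rw [hRm, hRm', sub_mul, mul_add, mul_add, one_mul, one_mul, mul_one, hN'N']
        abel
      set C := L * A₁ * Rm with hC
      have hM2 : ∀ i j, (L * A₁) i j = A₁ i j - (if i = 0 then 0 else c i) * A₁ 0 j := by
        intro i j
        rw [hL, Matrix.sub_mul, Matrix.one_mul, Matrix.sub_apply, hNA]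
      have hM2i0 : ∀ i, i ≠ 0 → (L * A₁) i 0 = 0 := by
        intro i hi
        rw [hM2, if_neg hi, ← hpiv_def, hc i]
        ring
      have hM20 : ∀ j, (L * A₁) 0 j = A₁ 0 j := by
        intro j; rw [hM2]; simp
      have hCe : ∀ i j, C i j = (L * A₁) i j - (L * A₁) i 0 * (if j = 0 then 0 else d j) := by
        intro i j
        rw [hC, hRm, Matrix.mul_sub, Matrix.mul_one, Matrix.sub_apply, hAN']
      have hC00 : C 0 0 = piv := by rw [hCe, hM20]; simp [hpiv_def]
      have hCi0 : ∀ i, i ≠ 0 → C i 0 = 0 := by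
        intro i hi; rw [hCe, hM2i0 i hi]; simp
      have hC0j : ∀ j, j ≠ 0 → C 0 j = 0 := by
        intro j hj
        rw [hCe, hM20, hM20, if_neg hj, ← hpiv_def, hd j]
        ring
      have hCminor : ∀ (p : Fin (r + 2) → Fin k) (q : Fin (r + 2) → Fin l),
          t ^ ((r + 2) * m + 1) ∣ (C.submatrix p q).det := by
        intro p q
        have hA₁m : ∀ (p : Fin (r + 2) → Fin k) (q : Fin (r + 2) → Fin l),
            (A₁.submatrix p q).det ∈ Ideal.span {t ^ ((r + 2) * m + 1)} := by
          intro p q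
          rw [hA₁, Matrix.submatrix_submatrix]
          exact Ideal.mem_span_singleton.mpr (hA _ _)
        have := minor_mul_right (L * A₁) Rm _
          (fun p q => minor_mul_left L A₁ _ hA₁m p q) p q
        exact Ideal.mem_span_singleton.mp this
      set D : Matrix (Fin k) (Fin l) R :=
        Matrix.of (fun i j => if i = 0 ∨ j = 0 then 0 else C i j) with hD
      have hDminor : ∀ (p : Fin (r + 1) → Fin k) (q : Fin (r + 1) → Fin l),
          t ^ ((r + 1) * m + 1) ∣ (D.submatrix p q).det := by
        intro p q
        by_cases hp0 : ∃ a, p a = 0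
        · obtain ⟨a, ha⟩ := hp0
          rw [Matrix.det_eq_zero_of_row_eq_zero a (fun j => by simp [hD, ha])]
          exact dvd_zero _
        by_cases hq0 : ∃ b, q b = 0
        · obtain ⟨b, hb⟩ := hq0
          rw [Matrix.det_eq_zero_of_column_eq_zero b (fun i => by simp [hD, hb])]
          exact dvd_zero _
        push_neg at hp0 hq0
        have hsub : D.submatrix p q = C.submatrix p q := by
          ext i j; simp [hD, hp0 i, hq0 j]
        rw [hsub]
        set P : Fin (r + 2) → Fin k := Fin.cons 0 p with hP
        set Q : Fin (r + 2) → Fin l := Fin.cons 0 q with hQ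
        have hE := hCminor P Q
        have hEdet : (C.submatrix P Q).det = piv * (C.submatrix p q).det := by
          rw [det_expand_first]
          · have h00 : (C.submatrix P Q) 0 0 = piv := by
              simp [hP, hQ, Matrix.submatrix_apply, Fin.cons_zero, hC00]
            have hss : (C.submatrix P Q).submatrix Fin.succ Fin.succ = C.submatrix p q := by
              ext i j
              simp [hP, hQ, Matrix.submatrix_apply, Fin.cons_succ]
            rw [h00, hss]
          · intro i hi
            obtain ⟨i', rfl⟩ := Fin.exists_succ_eq.mpr hi
            have : (C.submatrix P Q) (Fin.succ i') 0 = C (p i') 0 := by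
              simp [hP, hQ, Matrix.submatrix_apply, Fin.cons_succ, Fin.cons_zero]
            rw [this]
            exact hCi0 _ (hp0 i')
        rw [hEdet] at hE
        exact pivot_cancel hirr hpivn hE (by ring_nf; omega)
      obtain ⟨B', hB'minor, hB'cong⟩ := ih k l D hDminor
      set B'' : Matrix (Fin k) (Fin l) R :=
        Matrix.of (fun i j => if i = 0 ∨ j = 0 then 0 else B' i j) with hB''
      have hB''minor : ∀ (p : Fin (r + 1) → Fin k) (q : Fin (r + 1) → Fin l),
          (B''.submatrix p q).det = 0 := by
        intro p q
        by_cases hp0 : ∃ a, p a = 0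
        · obtain ⟨a, ha⟩ := hp0
          exact Matrix.det_eq_zero_of_row_eq_zero a (fun j => by simp [hB'', ha])
        by_cases hq0 : ∃ b, q b = 0
        · obtain ⟨b, hb⟩ := hq0
          exact Matrix.det_eq_zero_of_column_eq_zero b (fun i => by simp [hB'', hb])
        push_neg at hp0 hq0
        have hsub : B''.submatrix p q = B'.submatrix p q := by
          ext i j; simp [hB'', hp0 i, hq0 j]
        rw [hsub]; exact hB'minor p q
      have hB''cong : ∀ i j, t ^ (m + 1) ∣ D i j - B'' i j := by
        intro i j
        by_cases h0 : i = 0 ∨ j = 0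
        · simp [hD, hB'', h0]
        · have := hB'cong i j
          simpa [hD, hB'', h0] using this
      set BC : Matrix (Fin k) (Fin l) R :=
        Matrix.of (fun i j => if i = 0 ∨ j = 0 then C i j else B'' i j) with hBC
      have hBC0 : ∀ j, j ≠ 0 → BC 0 j = 0 := by
        intro j hj; simp [hBC, hC0j j hj]
      have hBCi0 : ∀ i, i ≠ 0 → BC i 0 = 0 := by
        intro i hi; simp [hBC, hCi0 i hi]
      have hBCinner : ∀ i j, i ≠ 0 → j ≠ 0 → BC i j = B'' i j := by
        intro i j hi hj; simp [hBC, hi, hj]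
      have hBC00 : BC 0 0 = piv := by
        simp [hBC, hC00]
      have hB''rplus : ∀ (p : Fin (r + 2) → Fin k) (q : Fin (r + 2) → Fin l),
          (B''.submatrix p q).det = 0 := by
        intro p q
        rw [Matrix.det_succ_column_zero]
        refine Finset.sum_eq_zero fun i _ => ?_
        have : ((B''.submatrix p q).submatrix i.succAbove Fin.succ).det = 0 := by
          rw [Matrix.submatrix_submatrix]
          exact hB''minor _ _
        rw [this]; ring
      have hBCminor : ∀ (p : Fin (r + 2) → Fin k) (q : Fin (r + 2) → Fin l),
          (BC.submatrix p q).det = 0 := by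
        intro p q
        by_cases hp : Function.Injective p
        · by_cases hq : Function.Injective q
          · by_cases hp0 : ∃ a, p a = 0
            · by_cases hq0 : ∃ b, q b = 0
              · obtain ⟨a, ha⟩ := hp0
                obtain ⟨b, hb⟩ := hq0
                set p' := p ∘ (Equiv.swap 0 a) with hp'
                set q' := q ∘ (Equiv.swap 0 b) with hq'
                have hP0 : p' 0 = 0 := by
                  simp [hp', Equiv.swap_apply_left, ha]
                have hQ0 : q' 0 = 0 := by
                  simp [hq', Equiv.swap_apply_left, hb]
                have hp'inj : Function.Injective p' := hp.comp (Equiv.injective _)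
                have hq'inj : Function.Injective q' := hq.comp (Equiv.injective _)
                have hdet0 : (BC.submatrix p' q').det = 0 := by
                  rw [det_expand_first]
                  · have hss : (BC.submatrix p' q').submatrix Fin.succ Fin.succ
                        = B''.submatrix (p' ∘ Fin.succ) (q' ∘ Fin.succ) := by
                      ext i j
                      have hpi : p' (Fin.succ i) ≠ 0 := by
                        intro hcc
                        have := hp'inj (hcc.trans hP0.symm)
                        exact (Fin.succ_ne_zero i) this
                      have hqj : q' (Fin.succ j) ≠ 0 := by
                        intro hcc
                        have := hq'inj (hcc.trans hQ0.symm)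
                        exact (Fin.succ_ne_zero j) this
                      simp [Matrix.submatrix_apply, hBCinner _ _ hpi hqj]
                    rw [hss, hB''minor]
                    ring
                  · intro i hi
                    have hpi : p' i ≠ 0 := by
                      intro hcc
                      exact hi (hp'inj (hcc.trans hP0.symm))
                    simp only [Matrix.submatrix_apply]
                    rw [hQ0]
                    exact hBCi0 _ hpi
                have e1 : BC.submatrix p' q'
                    = ((BC.submatrix p q).submatrix (Equiv.swap 0 a) id).submatrix
                        id (Equiv.swap 0 b) := by
                  simp [Matrix.submatrix_submatrix, hp', hq']
                rw [e1, Matrix.det_permute', Matrix.det_permute] at hdet0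
                have h2a : ((Equiv.Perm.sign (Equiv.swap (0 : Fin (r + 2)) a) : ℤ) : R) ≠ 0 := by
                  rcases Int.units_eq_one_or (Equiv.Perm.sign (Equiv.swap (0 : Fin (r + 2)) a))
                    with h3 | h3 <;> rw [h3] <;> simp
                have h2b : ((Equiv.Perm.sign (Equiv.swap (0 : Fin (r + 2)) b) : ℤ) : R) ≠ 0 := by
                  rcases Int.units_eq_one_or (Equiv.Perm.sign (Equiv.swap (0 : Fin (r + 2)) b))
                    with h3 | h3 <;> rw [h3] <;> simp
                rcases mul_eq_zero.mp hdet0 with h4 | h4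
                · exact absurd h4 h2b
                rcases mul_eq_zero.mp h4 with h5 | h5
                · exact absurd h5 h2a
                exact h5
              · push_neg at hq0
                obtain ⟨a, ha⟩ := hp0
                refine Matrix.det_eq_zero_of_row_eq_zero a (fun j => ?_)
                simp only [Matrix.submatrix_apply, ha]
                exact hBC0 _ (hq0 j)
            · push_neg at hp0
              by_cases hq0 : ∃ b, q b = 0
              · obtain ⟨b, hb⟩ := hq0
                refine Matrix.det_eq_zero_of_column_eq_zero b (fun i => ?_)
                simp only [Matrix.submatrix_apply, hb]
                exact hBCi0 _ (hp0 i)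
              · push_neg at hq0
                have hsub : BC.submatrix p q = B''.submatrix p q := by
                  ext i j
                  simp only [Matrix.submatrix_apply]
                  exact hBCinner _ _ (hp0 i) (hq0 j)
                rw [hsub]
                exact hB''rplus p q
          · obtain ⟨a, b, hab, hne⟩ := Function.not_injective_iff.mp hq
            exact Matrix.det_zero_of_column_eq hne
              (fun i => by simp [Matrix.submatrix_apply, hab])
        · obtain ⟨a, b, hab, hne⟩ := Function.not_injective_iff.mp hp
          exact Matrix.det_zero_of_row_eq hne
            (funext fun j => by simp [Matrix.submatrix_apply, hab])
      have hBCcong : ∀ i j, t ^ (m + 1) ∣ C i j - BC i j := by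
        intro i j
        by_cases h0 : i = 0 ∨ j = 0
        · rcases h0 with h0 | h0 <;> subst h0 <;> simp [hBC]
        · have h1 := hB''cong i j
          push_neg at h0
          have hDij : D i j = C i j := by simp [hD, h0.1, h0.2]
          rw [hBCinner i j h0.1 h0.2] at *
          rw [← hDij]
          exact h1
      set B₁ := L' * BC * Rm' with hB₁
      have hA₁eq : L' * C * Rm' = A₁ := by
        rw [hC]
        calc L' * (L * A₁ * Rm) * Rm' = (L' * L) * A₁ * (Rm * Rm') := by
              simp only [Matrix.mul_assoc]
        _ = A₁ := by rw [hLL', hRR', Matrix.one_mul, Matrix.mul_one]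
      have hB₁minor : ∀ (p : Fin (r + 2) → Fin k) (q : Fin (r + 2) → Fin l),
          (B₁.submatrix p q).det = 0 := by
        intro p q
        have := minor_mul_right (L' * BC) Rm' (⊥ : Ideal R)
          (fun p q => minor_mul_left L' BC ⊥
            (fun p q => Ideal.mem_bot.mpr (hBCminor p q)) p q) p q
        exact Ideal.mem_bot.mp this
      have hB₁cong : ∀ i j, t ^ (m + 1) ∣ A₁ i j - B₁ i j := by
        intro i j
        have hsub : A₁ - B₁ = L' * (C - BC) * Rm' := by
          rw [Matrix.mul_sub, Matrix.sub_mul, hA₁eq, hB₁]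
        have h2 := dvd_mul_mul_entry (t ^ (m + 1)) L' (C - BC) Rm'
          (fun a b => by simpa [Matrix.sub_apply] using hBCcong a b) i j
        rw [← hsub] at h2
        simpa [Matrix.sub_apply] using h2
      refine ⟨B₁.submatrix e f, ?_, ?_⟩
      · intro p q
        rw [Matrix.submatrix_submatrix]
        exact hB₁minor _ _
      · intro i j
        have hAij : A i j = A₁ (e i) (f j) := by
          simp [hA₁, Matrix.submatrix_apply, he, hf, Equiv.swap_apply_self]
        rw [hAij]
        exact hB₁cong (e i) (f j)

end DVR

/-- **Theorem (determinantal ideals over a DVR, lower bound and exact value).** Let `(R, (t))`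
be a discrete valuation ring with uniformizer `t`, let `k ≤ l` and `1 ≤ r ≤ k`, and let `n ≥ 1`.
Then there is a `k × l` matrix `A` over `R` all of whose `r × r` minors lie in `(t)^(rn − r)`
such that every matrix `B` congruent to `A` modulo `(t)ⁿ` entrywise has a nonzero `r × r`
minor.  Consequently `β_n(I_r) = rn − r + 1`: the number `rn − r + 1` is the least `β` such
that every `A` whose `r × r` minors lie in `(t)^β` is entrywise congruent modulo `(t)ⁿ` to a
matrix whose `r × r` minors all vanish. -/
theorem determinantal_artin_lower_bound_and_value
    (R : Type*) [CommRing R] [IsDomain R] [IsDiscreteValuationRing R]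
    (t : R) (ht0 : t ≠ 0) (ht : maximalIdeal R = Ideal.span {t})
    (k l r : ℕ) (hk : 0 < k) (hkl : k ≤ l) (hr : 1 ≤ r) (hrk : r ≤ k)
    (n : ℕ) (hn : 1 ≤ n) :
    (∃ A : Matrix (Fin k) (Fin l) R,
      (∀ (rows : Fin r → Fin k) (cols : Fin r → Fin l), StrictMono rows → StrictMono cols →
        (A.submatrix rows cols).det ∈ Ideal.span {t} ^ (r * n - r)) ∧
      ∀ B : Matrix (Fin k) (Fin l) R, (∀ i j, A i j - B i j ∈ Ideal.span {t} ^ n) →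
        ∃ (rows : Fin r → Fin k) (cols : Fin r → Fin l),
          StrictMono rows ∧ StrictMono cols ∧ (B.submatrix rows cols).det ≠ 0) ∧
    IsLeast {β : ℕ | ∀ A : Matrix (Fin k) (Fin l) R,
      (∀ (rows : Fin r → Fin k) (cols : Fin r → Fin l), StrictMono rows → StrictMono cols →
        (A.submatrix rows cols).det ∈ Ideal.span {t} ^ β) →
      ∃ B : Matrix (Fin k) (Fin l) R,
        (∀ (rows : Fin r → Fin k) (cols : Fin r → Fin l), StrictMono rows → StrictMono cols →
          (B.submatrix rows cols).det = 0) ∧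
        ∀ i j, A i j - B i j ∈ Ideal.span {t} ^ n} (r * n - r + 1) := by
  classical
  obtain ⟨m, rfl⟩ : ∃ m, n = m + 1 := ⟨n - 1, by omega⟩
  obtain ⟨s, rfl⟩ : ∃ s, r = s + 1 := ⟨r - 1, by omega⟩
  have hirr : Irreducible t := (IsDiscreteValuationRing.irreducible_iff_uniformizer t).mpr ht
  have hexp : (s + 1) * (m + 1) - (s + 1) = (s + 1) * m := by
    have h1 : (s + 1) * (m + 1) = (s + 1) * m + (s + 1) := by ring
    omega
  have hmem : ∀ (x : R) (a : ℕ), x ∈ Ideal.span {t} ^ a ↔ t ^ a ∣ x := by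
    intro x a
    rw [Ideal.span_singleton_pow, Ideal.mem_span_singleton]
  set A₀ : Matrix (Fin k) (Fin l) R :=
    Matrix.of (fun i j => if (i : ℕ) = (j : ℕ) then t ^ m else 0) with hA₀
  have hA₀entry : ∀ i j, t ^ m ∣ A₀ i j := by
    intro i j
    by_cases h : (i : ℕ) = (j : ℕ) <;> simp [hA₀, h]
  have hA₀minors : ∀ (rows : Fin (s + 1) → Fin k) (cols : Fin (s + 1) → Fin l),
      ((A₀.submatrix rows cols).det) ∈ Ideal.span {t} ^ ((s + 1) * (m + 1) - (s + 1)) := by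
    intro rows cols
    rw [hexp, hmem]
    have h1 := pow_dvd_det t (A₀.submatrix rows cols) (fun i j => hA₀entry _ _)
    have hee : m * (s + 1) = (s + 1) * m := Nat.mul_comm _ _
    rwa [hee] at h1
  have hpart1b : ∀ B : Matrix (Fin k) (Fin l) R,
      (∀ i j, A₀ i j - B i j ∈ Ideal.span {t} ^ (m + 1)) →
      ∃ (rows : Fin (s + 1) → Fin k) (cols : Fin (s + 1) → Fin l),
        StrictMono rows ∧ StrictMono cols ∧ (B.submatrix rows cols).det ≠ 0 := by
    intro B hB
    refine ⟨Fin.castLE hrk, Fin.castLE (hrk.trans hkl), ?_, ?_, ?_⟩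
    · intro a b hab; exact hab
    · intro a b hab; exact hab
    set M := B.submatrix (Fin.castLE hrk) (Fin.castLE (hrk.trans hkl)) with hM
    have hdiag : ∀ i : Fin (s + 1), t ^ (m + 1) ∣ (t ^ m - M i i) := by
      intro i
      have h1 := (hmem _ _).mp (hB (Fin.castLE hrk i) (Fin.castLE (hrk.trans hkl) i))
      have h2 : A₀ (Fin.castLE hrk i) (Fin.castLE (hrk.trans hkl) i) = t ^ m := by
        simp [hA₀]
      rw [h2] at h1
      exact h1
    have hoff : ∀ i j : Fin (s + 1), i ≠ j → t ^ (m + 1) ∣ M i j := by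
      intro i j hij
      have h1 := (hmem _ _).mp (hB (Fin.castLE hrk i) (Fin.castLE (hrk.trans hkl) j))
      have h2 : A₀ (Fin.castLE hrk i) (Fin.castLE (hrk.trans hkl) j) = 0 := by
        rw [hA₀]
        simp only [Matrix.of_apply, Fin.coe_castLE]
        rw [if_neg (fun hcc => hij (Fin.ext hcc))]
      rw [h2, zero_sub] at h1
      simpa [dvd_neg, hM, Matrix.submatrix_apply] using h1
    intro hdet0
    have key : t ^ ((s + 1) * m + 1) ∣ M.det - t ^ ((s + 1) * m) := by
      rw [Matrix.det_apply]
      rw [← Finset.add_sum_erase _ _ (Finset.mem_univ (1 : Equiv.Perm (Fin (s + 1))))]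
      have hid : (Equiv.Perm.sign (1 : Equiv.Perm (Fin (s + 1)))) •
          ∏ i, M ((1 : Equiv.Perm (Fin (s + 1))) i) i = ∏ i, M i i := by
        simp
      rw [hid]
      have h1 : t ^ ((s + 1) * m + 1) ∣ (∏ i, M i i) - t ^ ((s + 1) * m) := by
        have h2 := prod_sub_dvd t m (Finset.univ : Finset (Fin (s + 1)))
          (fun i => t ^ m - M i i) (fun i _ => hdiag i)
        simp only [sub_sub_cancel] at h2
        have hmc : m * (s + 1) = (s + 1) * m := Nat.mul_comm _ _
        rw [Finset.card_univ, Fintype.card_fin, hmc] at h2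
        exact h2
      have h2 : ∀ σ ∈ Finset.univ.erase (1 : Equiv.Perm (Fin (s + 1))),
          t ^ ((s + 1) * m + 1) ∣ Equiv.Perm.sign σ • ∏ i, M (σ i) i := by
        intro σ hσ
        refine zsmul_dvd _ ?_
        have hσ1 : σ ≠ 1 := (Finset.mem_erase.mp hσ).1
        have hex : ∃ i0, σ i0 ≠ i0 := by
          by_contra hco; push_neg at hco
          exact hσ1 (Equiv.ext fun x => hco x)
        obtain ⟨i0, hi0⟩ := hex
        rw [← Finset.mul_prod_erase _ _ (Finset.mem_univ i0)]
        have hfac1 : t ^ (m + 1) ∣ M (σ i0) i0 := hoff _ _ hi0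
        have hfac2 : t ^ (m * ((Finset.univ.erase i0).card)) ∣
            ∏ i ∈ Finset.univ.erase i0, M (σ i) i := by
          have h3 : ∀ i ∈ Finset.univ.erase i0, t ^ m ∣ M (σ i) i := by
            intro i _
            by_cases hii : σ i = i
            · rw [hii]
              have h4 := hdiag i
              have h5 : M i i = t ^ m - (t ^ m - M i i) := by ring
              rw [h5]
              exact dvd_sub (dvd_refl _) ((pow_dvd_pow t (Nat.le_succ m)).trans h4)
            · exact (pow_dvd_pow t (Nat.le_succ m)).trans (hoff _ _ hii)
          simpa [← pow_mul] using pow_card_dvd_prod _ (t ^ m) _ h3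
        have hcard : (Finset.univ.erase i0).card = s := by
          rw [Finset.card_erase_of_mem (Finset.mem_univ _), Finset.card_univ]; simp
        rw [hcard] at hfac2
        have h6 : t ^ ((s + 1) * m + 1) = t ^ (m + 1) * t ^ (m * s) := by ring
        rw [h6]
        exact mul_dvd_mul hfac1 hfac2
      have h7 := dvd_add h1 (Finset.dvd_sum h2)
      convert h7 using 1
      ring
    rw [hdet0, zero_sub, dvd_neg] at key
    obtain ⟨y, hy⟩ := key
    have hpow : (t : R) ^ ((s + 1) * m) ≠ 0 := pow_ne_zero _ ht0
    have h8 : (1 : R) = t * y := by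
      apply mul_left_cancel₀ hpow
      rw [mul_one]
      calc t ^ ((s + 1) * m) = t ^ ((s + 1) * m + 1) * y := hy
      _ = t ^ ((s + 1) * m) * (t * y) := by ring
    exact hirr.not_isUnit (IsUnit.of_mul_eq_one (a := t) y h8.symm)
  constructor
  · exact ⟨A₀, fun rows cols _ _ => hA₀minors rows cols, fun B hB => hpart1b B hB⟩
  · constructor
    · intro A hA
      rw [hexp] at hA
      have hgen : ∀ (p : Fin (s + 1) → Fin k) (q : Fin (s + 1) → Fin l),
          t ^ ((s + 1) * m + 1) ∣ (A.submatrix p q).det := by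
        intro p q
        have h1 := generalized_of_strictMono A (Ideal.span {t} ^ ((s + 1) * m + 1))
          (fun rows cols h1 h2 => hA rows cols h1 h2) p q
        exact (hmem _ _).mp h1
      obtain ⟨B, hBmin, hBcong⟩ := main_approx hirr m s k l A hgen
      exact ⟨B, fun rows cols _ _ => hBmin rows cols,
        fun i j => (hmem _ _).mpr (hBcong i j)⟩
    · intro β hβ
      by_contra hlt
      push_neg at hlt
      have hβle : β ≤ (s + 1) * m := by omega
      have hA₀β : ∀ (rows : Fin (s + 1) → Fin k) (cols : Fin (s + 1) → Fin l),
          StrictMono rows → StrictMono cols →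
          ((A₀.submatrix rows cols).det) ∈ Ideal.span {t} ^ β := by
        intro rows cols h1 h2
        exact Ideal.pow_le_pow_right hβle (hexp ▸ hA₀minors rows cols)
      obtain ⟨B, hBmin, hBcong⟩ := hβ A₀ hA₀β
      obtain ⟨rows, cols, h1, h2, h3⟩ := hpart1b B hBcong
      exact h3 (hBmin rows cols h1 h2)
end
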